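/- arXiv:1305.4825 — 3 statements merged into one kernel-verified Lean document; each statement's English description precedes it below -/
import Mathlib

section
/- (Lemma 4.3, Gaussian shift comparison.) Let N ≥ 1, σ > 0, u, v ∈ ℝ^N, and let ν_u and ν_v be the Gaussian measures N(u, σ²I_N) and N(v, σ²I_N) on ℝ^N. Let Φ denote the cumulative distribution function of a standard real Gaussian. Then for every Borel set A ⊂ ℝ^N, ν_v(A) ≥ 1 − Φ( Φ^{-1}(1 − ν_u(A)) + ‖u − v‖₂/σ ). -/
open MeasureTheory ProbabilityTheory Real Set
open scoped ENNReal

noncomputable section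

/-- The standard gaussian cumulative distribution function `Φ`. -/
def Phi (t : ℝ) : ℝ := ((gaussianReal 0 1) (Set.Iic t)).toReal

/-- `Φ` extended to the extended reals (with `Φ(−∞) = 0` and `Φ(+∞) = 1`). -/
def PhiE : EReal → ℝ := fun t => if t = ⊥ then 0 else if t = ⊤ then 1 else Phi t.toReal

/-- The (generalized) inverse of the standard gaussian cdf. -/
def PhiInv (p : ℝ) : EReal := sInf {t : EReal | p ≤ PhiE t}

/-- The gaussian measure `N(u, σ²I_N)` on `ℝ^N`. -/
def gaussVec {N : ℕ} (u : Fin N → ℝ) (σ : ℝ) : Measure (Fin N → ℝ) :=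
  Measure.pi fun i => gaussianReal (u i) (Real.toNNReal (σ ^ 2))

open scoped NNReal

lemma gauss_meas_pos {m : ℝ} {B : Set ℝ} (hB : MeasurableSet B) (hvol : volume B ≠ 0) :
    0 < gaussianReal m 1 B := by
  rw [gaussianReal_apply m one_ne_zero]
  rw [pos_iff_ne_zero]
  intro h
  rw [lintegral_eq_zero_iff (measurable_gaussianPDF m 1)] at h
  have : ∀ᵐ x ∂(volume.restrict B), False := by
    filter_upwards [h] with x hx
    exact absurd hx (gaussianPDF_pos m one_ne_zero x).ne'
  rw [MeasureTheory.ae_iff] at this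
  simp only [not_false_eq_true, Measure.restrict_apply MeasurableSet.univ, Set.univ_inter] at this
  simp at this
  exact hvol this

lemma gauss_singleton (m t : ℝ) : gaussianReal m 1 {t} = 0 := by
  rw [gaussianReal_apply m one_ne_zero]
  exact setLIntegral_measure_zero _ _ (measure_singleton t)

lemma gauss_Iio (m t : ℝ) : gaussianReal m 1 (Iio t) = gaussianReal m 1 (Iic t) := by
  refine le_antisymm (measure_mono Iio_subset_Iic_self) ?_
  calc gaussianReal m 1 (Iic t) ≤ gaussianReal m 1 (Iio t ∪ {t}) := by
        apply measure_mono
        intro x hx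
        rcases (Set.mem_Iic.1 hx).lt_or_eq with h | h
        · exact Or.inl h
        · exact Or.inr h
    _ ≤ gaussianReal m 1 (Iio t) + gaussianReal m 1 {t} := measure_union_le _ _
    _ = gaussianReal m 1 (Iio t) := by rw [gauss_singleton, add_zero]

lemma g01_Ici (s : ℝ) : gaussianReal 0 1 (Ici s) = gaussianReal 0 1 (Iic (-s)) := by
  have hmap := gaussianReal_map_const_mul (μ := 0) (v := 1) (-1)
  have h1 : (⟨(-1:ℝ)^2, sq_nonneg _⟩ : ℝ≥0) * 1 = 1 := by
    ext; norm_num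
  replace hmap : Measure.map (fun x : ℝ => -1 * x) (gaussianReal 0 1) = gaussianReal 0 1 := by
    rw [hmap]; congr 1
    simp
  have := (Measure.map_apply (measurable_const_mul (-1)) measurableSet_Iic
      (μ := gaussianReal 0 1) (s := Iic (-s)))
  rw [hmap] at this
  rw [this]
  congr 1
  ext x
  simp only [mem_preimage, mem_Iic, mem_Ici]
  constructor <;> intro h <;> linarith

lemma gauss_Ici (a c : ℝ) : gaussianReal a 1 (Ici c) = gaussianReal 0 1 (Iic (a - c)) := by
  have hmap := gaussianReal_map_add_const (μ := 0) (v := 1) a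
  rw [zero_add] at hmap
  have := (Measure.map_apply (measurable_add_const a) measurableSet_Ici
      (μ := gaussianReal 0 1) (s := Ici c))
  rw [hmap] at this
  rw [this]
  have hpre : (fun x => x + a) ⁻¹' (Ici c) = Ici (c - a) := by
    ext x; simp only [mem_preimage, mem_Ici]; constructor <;> intro h <;> linarith
  rw [hpre, g01_Ici]
  norm_num

lemma Phi_nonneg (t : ℝ) : 0 ≤ Phi t := ENNReal.toReal_nonneg

lemma Phi_le_one (t : ℝ) : Phi t ≤ 1 := by
  unfold Phi
  have := prob_le_one (μ := gaussianReal 0 1) (s := Iic t)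
  calc ((gaussianReal 0 1) (Iic t)).toReal ≤ (1 : ℝ≥0∞).toReal :=
        ENNReal.toReal_mono ENNReal.one_ne_top this
    _ = 1 := by simp

lemma ofReal_Phi (t : ℝ) : ENNReal.ofReal (Phi t) = gaussianReal 0 1 (Iic t) :=
  ENNReal.ofReal_toReal (measure_ne_top _ _)

lemma Phi_strictMono : StrictMono Phi := by
  intro s t hst
  unfold Phi
  have hsub : Iic t = Iic s ∪ Ioc s t := (Iic_union_Ioc_eq_Iic hst.le).symm
  have hdisj : Disjoint (Iic s) (Ioc s t) := by
    rw [Set.disjoint_left]; intro x hx hx2; exact absurd hx2.1 (not_lt.2 hx)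
  have : gaussianReal 0 1 (Iic t) = gaussianReal 0 1 (Iic s) + gaussianReal 0 1 (Ioc s t) := by
    rw [hsub, measure_union hdisj measurableSet_Ioc]
  have hpos : 0 < gaussianReal 0 1 (Ioc s t) := by
    apply gauss_meas_pos measurableSet_Ioc
    rw [Real.volume_Ioc]
    simp [hst]
  rw [ENNReal.toReal_lt_toReal (measure_ne_top _ _) (measure_ne_top _ _), this]
  have h1 : gaussianReal 0 1 (Iic s) ≠ ⊤ := measure_ne_top _ _
  have h2 : gaussianReal 0 1 (Ioc s t) ≠ ⊤ := measure_ne_top _ _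
  exact ENNReal.lt_add_right h1 hpos.ne'

lemma Phi_pos (t : ℝ) : 0 < Phi t := by
  unfold Phi
  have := gauss_meas_pos (m := 0) (B := Iic t) measurableSet_Iic (by simp [Real.volume_Iic])
  exact ENNReal.toReal_pos this.ne' (measure_ne_top _ _)

lemma Phi_neg (t : ℝ) : Phi (-t) = 1 - Phi t := by
  unfold Phi
  have h1 : gaussianReal 0 1 (Iic (-t)) = gaussianReal 0 1 (Ici t) := (g01_Ici t).symm
  have h2 : gaussianReal 0 1 (Ici t) = 1 - gaussianReal 0 1 (Iio t) := by
    have := measure_compl (μ := gaussianReal 0 1) (measurableSet_Iio (a := t)) (measure_ne_top _ _)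
    rw [compl_Iio] at this
    rw [this]; simp
  rw [h1, h2, gauss_Iio]
  rw [ENNReal.toReal_sub_of_le (prob_le_one) ENNReal.one_ne_top]
  simp

lemma Phi_lt_one (t : ℝ) : Phi t < 1 := by
  have := Phi_pos (-t)
  rw [Phi_neg] at this
  linarith

lemma Phi_sub_le {s t : ℝ} (hst : s ≤ t) : Phi t - Phi s ≤ t - s := by
  unfold Phi
  have hsub : Iic t = Iic s ∪ Ioc s t := (Iic_union_Ioc_eq_Iic hst).symm
  have hdisj : Disjoint (Iic s) (Ioc s t) := by
    rw [Set.disjoint_left]; intro x hx hx2; exact absurd hx2.1 (not_lt.2 hx)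
  have heq : gaussianReal 0 1 (Iic t) = gaussianReal 0 1 (Iic s) + gaussianReal 0 1 (Ioc s t) := by
    rw [hsub, measure_union hdisj measurableSet_Ioc]
  have hb : gaussianReal 0 1 (Ioc s t) ≤ ENNReal.ofReal (t - s) := by
    rw [gaussianReal_apply 0 one_ne_zero]
    calc ∫⁻ x in Ioc s t, gaussianPDF 0 1 x ≤ ∫⁻ _ in Ioc s t, 1 := by
          apply setLIntegral_mono measurable_const
          intro x _
          unfold gaussianPDF
          rw [show (1 : ℝ≥0∞) = ENNReal.ofReal 1 by simp]
          apply ENNReal.ofReal_le_ofReal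
          unfold gaussianPDFReal
          have h2pi : (1:ℝ) ≤ Real.sqrt (2 * π * 1) := by
            calc (1:ℝ) = Real.sqrt 1 := Real.sqrt_one.symm
              _ ≤ Real.sqrt (2 * π * 1) := Real.sqrt_le_sqrt (by nlinarith [Real.pi_gt_three])
          have hexp : Real.exp (-(x - 0)^2 / (2 * 1)) ≤ 1 := by
            rw [Real.exp_le_one_iff]
            apply div_nonpos_of_nonpos_of_nonneg
            · nlinarith [sq_nonneg (x - 0)]
            · norm_num
          have hinv : (Real.sqrt (2 * π * (1:ℝ≥0)))⁻¹ ≤ 1 := by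
            rw [NNReal.coe_one]
            apply inv_le_one_of_one_le₀ h2pi
          have hexpnn : 0 ≤ Real.exp (-(x - 0)^2 / (2 * (1:ℝ≥0))) := Real.exp_nonneg _
          calc (Real.sqrt (2 * π * (1:ℝ≥0)))⁻¹ * Real.exp (-(x - 0)^2 / (2 * (1:ℝ≥0)))
              ≤ 1 * 1 := by
                apply mul_le_mul hinv _ hexpnn zero_le_one
                rw [NNReal.coe_one]
                exact hexp
            _ = 1 := by norm_num
      _ = ENNReal.ofReal (t - s) := by
          rw [setLIntegral_const, one_mul, Real.volume_Ioc]
  have h1 : ((gaussianReal 0 1) (Iic t)).toReal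
      = ((gaussianReal 0 1) (Iic s)).toReal + ((gaussianReal 0 1) (Ioc s t)).toReal := by
    rw [heq, ENNReal.toReal_add (measure_ne_top _ _) (measure_ne_top _ _)]
  have h2 : ((gaussianReal 0 1) (Ioc s t)).toReal ≤ t - s := by
    have := ENNReal.toReal_mono (by simp) hb
    rwa [ENNReal.toReal_ofReal (by linarith)] at this
  linarith

lemma Phi_continuous : Continuous Phi := by
  apply LipschitzWith.continuous (K := 1)
  apply LipschitzWith.of_dist_le_mul
  intro x y
  rw [Real.dist_eq, Real.dist_eq, NNReal.coe_one, one_mul]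
  rcases le_total x y with h | h
  · rw [abs_of_nonpos (by linarith [Phi_strictMono.monotone h]), abs_of_nonpos (by linarith)]
    linarith [Phi_sub_le h]
  · rw [abs_of_nonneg (by linarith [Phi_strictMono.monotone h]), abs_of_nonneg (by linarith)]
    linarith [Phi_sub_le h]

lemma tendsto_Phi_atTop : Filter.Tendsto Phi Filter.atTop (nhds 1) := by
  have h := tendsto_measure_Iic_atTop (gaussianReal 0 1)
  rw [measure_univ] at h
  have := (ENNReal.tendsto_toReal ENNReal.one_ne_top).comp h
  rw [ENNReal.toReal_one] at this; exact this

lemma tendsto_Phi_atBot : Filter.Tendsto Phi Filter.atBot (nhds 0) := by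
  have h : Filter.Tendsto (fun t => 1 - Phi (-t)) Filter.atBot (nhds 0) := by
    have h2 : Filter.Tendsto (fun t : ℝ => -t) Filter.atBot Filter.atTop :=
      Filter.tendsto_neg_atBot_atTop
    have := (tendsto_Phi_atTop.comp h2).const_sub 1
    simpa using this
  refine h.congr fun t => ?_
  rw [Phi_neg]; ring

lemma exists_Phi_eq {q : ℝ} (h0 : 0 < q) (h1 : q < 1) : ∃ t, Phi t = q := by
  obtain ⟨s, hs⟩ : ∃ s, Phi s < q := by
    have := tendsto_Phi_atBot.eventually_lt_const h0
    exact this.exists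
  obtain ⟨r, hr⟩ : ∃ r, q < Phi r := by
    have := tendsto_Phi_atTop.eventually_const_lt h1
    exact this.exists
  have hsr : s ≤ r := by
    by_contra hc
    push_neg at hc
    exact absurd (Phi_strictMono hc) (by linarith)
  have := intermediate_value_Icc hsr Phi_continuous.continuousOn
  obtain ⟨t, _, ht⟩ := this ⟨hs.le, hr.le⟩
  exact ⟨t, ht⟩




lemma pdf_conv (v₁ v₂ : ℝ≥0) (h₁ : v₁ ≠ 0) (h₂ : v₂ ≠ 0) (x z : ℝ) :
    gaussianPDFReal 0 v₁ x * gaussianPDFReal 0 v₂ (z - x)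
      = gaussianPDFReal 0 (v₁ + v₂) z
        * gaussianPDFReal ((v₁ : ℝ) * z / ((v₁ : ℝ) + (v₂ : ℝ))) (v₁ * v₂ / (v₁ + v₂)) x := by
  have ha : (0:ℝ) < (v₁ : ℝ) := by exact_mod_cast pos_iff_ne_zero.2 h₁
  have hb : (0:ℝ) < (v₂ : ℝ) := by exact_mod_cast pos_iff_ne_zero.2 h₂
  unfold gaussianPDFReal
  push_cast
  rw [mul_mul_mul_comm, mul_mul_mul_comm ((Real.sqrt (2 * π * ((v₁:ℝ) + v₂)))⁻¹),
    ← Real.exp_add, ← Real.exp_add]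
  congr 1
  · rw [← mul_inv, ← mul_inv, ← Real.sqrt_mul (by positivity), ← Real.sqrt_mul (by positivity)]
    congr 1
    field_simp
  · congr 1
    field_simp
    ring

lemma gauss_conv0 (v₁ v₂ : ℝ≥0) (h₁ : v₁ ≠ 0) (h₂ : v₂ ≠ 0) :
    Measure.map (fun p : ℝ × ℝ => p.1 + p.2)
      ((gaussianReal 0 v₁).prod (gaussianReal 0 v₂)) = gaussianReal 0 (v₁ + v₂) := by
  have hv : v₁ + v₂ ≠ 0 := by
    intro h
    exact h₁ (by simpa using (add_eq_zero.1 h).1)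
  have hvs : v₁ * v₂ / (v₁ + v₂) ≠ 0 := by
    apply ne_of_gt
    apply div_pos (mul_pos (pos_iff_ne_zero.2 h₁) (pos_iff_ne_zero.2 h₂)) (pos_iff_ne_zero.2 hv)
  ext s hs
  have hadd : Measurable fun p : ℝ × ℝ => p.1 + p.2 := measurable_fst.add measurable_snd
  rw [Measure.map_apply hadd hs, Measure.prod_apply (hadd hs)]
  have hinner : ∀ x : ℝ, gaussianReal 0 v₂ (Prod.mk x ⁻¹' ((fun p : ℝ × ℝ => p.1 + p.2) ⁻¹' s))
      = ∫⁻ z in s, gaussianPDF 0 v₂ (z - x) := by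
    intro x
    rw [gaussianReal_apply 0 h₂]
    have hset : (Prod.mk x ⁻¹' ((fun p : ℝ × ℝ => p.1 + p.2) ⁻¹' s))
        = (fun y => x + y) ⁻¹' s := rfl
    rw [hset]
    rw [← lintegral_indicator (hs.preimage (measurable_const_add x)),
      ← lintegral_indicator hs]
    rw [← lintegral_add_right_eq_self
      (fun z => s.indicator (fun z => gaussianPDF 0 v₂ (z - x)) z) x]
    congr 1
    ext y
    by_cases hy : x + y ∈ s
    · rw [Set.indicator_of_mem (show (y:ℝ) + x ∈ s by rwa [add_comm]),
        Set.indicator_of_mem (show y ∈ (fun y => x + y) ⁻¹' s from hy)]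
      simp
    · rw [Set.indicator_of_notMem (show ¬((y:ℝ) + x ∈ s) by rwa [add_comm]),
        Set.indicator_of_notMem (show ¬(y ∈ (fun y => x + y) ⁻¹' s) from hy)]
  calc ∫⁻ x, gaussianReal 0 v₂ (Prod.mk x ⁻¹' ((fun p : ℝ × ℝ => p.1 + p.2) ⁻¹' s))
        ∂(gaussianReal 0 v₁)
      = ∫⁻ x, (∫⁻ z in s, gaussianPDF 0 v₂ (z - x)) ∂(gaussianReal 0 v₁) := by
        exact lintegral_congr hinner
    _ = ∫⁻ x, gaussianPDF 0 v₁ x * (∫⁻ z in s, gaussianPDF 0 v₂ (z - x)) := by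
        rw [gaussianReal_of_var_ne_zero 0 h₁]
        have hF : Measurable fun x : ℝ => ∫⁻ z in s, gaussianPDF 0 v₂ (z - x) :=
          Measurable.lintegral_prod_right'
            ((measurable_gaussianPDF 0 v₂).comp (measurable_snd.sub measurable_fst))
        rw [lintegral_withDensity_eq_lintegral_mul ℙ (measurable_gaussianPDF 0 v₁) hF]
        simp [Pi.mul_apply]
    _ = ∫⁻ x, (∫⁻ z in s, gaussianPDF 0 v₁ x * gaussianPDF 0 v₂ (z - x)) := by
        refine lintegral_congr fun x => ?_
        exact (lintegral_const_mul _
          ((measurable_gaussianPDF 0 v₂).comp (measurable_id.sub measurable_const))).symm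
    _ = ∫⁻ z in s, (∫⁻ x, gaussianPDF 0 v₁ x * gaussianPDF 0 v₂ (z - x)) := by
        apply lintegral_lintegral_swap
        apply Measurable.aemeasurable
        exact ((measurable_gaussianPDF 0 v₁).comp measurable_fst).mul
          ((measurable_gaussianPDF 0 v₂).comp (measurable_snd.sub measurable_fst))
    _ = ∫⁻ z in s, gaussianPDF 0 (v₁ + v₂) z := by
        refine lintegral_congr fun z => ?_
        have hpt : ∀ x : ℝ, gaussianPDF 0 v₁ x * gaussianPDF 0 v₂ (z - x)
            = gaussianPDF 0 (v₁ + v₂) z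
              * gaussianPDF ((v₁ : ℝ) * z / ((v₁ : ℝ) + (v₂ : ℝ))) (v₁ * v₂ / (v₁ + v₂)) x := by
          intro x
          unfold gaussianPDF
          rw [← ENNReal.ofReal_mul (gaussianPDFReal_nonneg _ _ _),
            ← ENNReal.ofReal_mul (gaussianPDFReal_nonneg _ _ _), pdf_conv v₁ v₂ h₁ h₂]
        simp_rw [hpt]
        rw [lintegral_const_mul _ (measurable_gaussianPDF _ _),
          lintegral_gaussianPDF_eq_one _ hvs, mul_one]
    _ = gaussianReal 0 (v₁ + v₂) s := (gaussianReal_apply 0 hv s).symm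

lemma gauss_conv (m₁ m₂ : ℝ) (v₁ v₂ : ℝ≥0) :
    Measure.map (fun p : ℝ × ℝ => p.1 + p.2)
      ((gaussianReal m₁ v₁).prod (gaussianReal m₂ v₂)) = gaussianReal (m₁ + m₂) (v₁ + v₂) := by
  have hadd : Measurable fun p : ℝ × ℝ => p.1 + p.2 := measurable_fst.add measurable_snd
  by_cases h₁ : v₁ = 0
  · subst h₁
    rw [gaussianReal_zero_var, Measure.dirac_prod, Measure.map_map hadd (measurable_prodMk_left)]
    have : ((fun p : ℝ × ℝ => p.1 + p.2) ∘ Prod.mk m₁) = fun x => m₁ + x := rfl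
    rw [this, gaussianReal_map_const_add, add_comm m₂ m₁, zero_add]
  by_cases h₂ : v₂ = 0
  · subst h₂
    rw [gaussianReal_zero_var, Measure.prod_dirac, Measure.map_map hadd (measurable_prodMk_right)]
    have : ((fun p : ℝ × ℝ => p.1 + p.2) ∘ (fun x => (x, m₂))) = fun x => x + m₂ := rfl
    rw [this, gaussianReal_map_add_const, add_zero]
  -- main case
  have e₁ : gaussianReal m₁ v₁ = Measure.map (fun x => x + m₁) (gaussianReal 0 v₁) := by
    rw [gaussianReal_map_add_const, zero_add]
  have e₂ : gaussianReal m₂ v₂ = Measure.map (fun x => x + m₂) (gaussianReal 0 v₂) := by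
    rw [gaussianReal_map_add_const, zero_add]
  rw [e₁, e₂, Measure.map_prod_map _ _ (measurable_add_const m₁) (measurable_add_const m₂),
    Measure.map_map hadd ((measurable_add_const m₁).prodMap (measurable_add_const m₂))]
  have hcomp : ((fun p : ℝ × ℝ => p.1 + p.2) ∘ Prod.map (fun x => x + m₁) (fun x => x + m₂))
      = (fun x => x + (m₁ + m₂)) ∘ (fun p : ℝ × ℝ => p.1 + p.2) := by
    ext p
    simp [Prod.map]
    ring
  rw [hcomp, ← Measure.map_map (measurable_add_const (m₁ + m₂)) hadd,
    gauss_conv0 v₁ v₂ h₁ h₂, gaussianReal_map_add_const, zero_add]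

lemma gauss_map_sum : ∀ (n : ℕ) (c u : Fin n → ℝ) (s : ℝ≥0),
    Measure.map (fun x : Fin n → ℝ => ∑ i, c i * x i)
        (Measure.pi fun i => gaussianReal (u i) s)
      = gaussianReal (∑ i, c i * u i) (Real.toNNReal (∑ i, (c i)^2) * s) := by
  intro n
  induction n with
  | zero =>
      intro c u s
      have h1 : (fun x : Fin 0 → ℝ => ∑ i, c i * x i) = fun _ => (0:ℝ) := by
        ext x; simp
      rw [h1, Measure.map_const, measure_univ, one_smul]
      simp [Measure.dirac, gaussianReal_zero_var]
  | succ n ih =>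
      intro c u s
      set e := MeasurableEquiv.piFinSuccAbove (fun _ : Fin (n+1) => ℝ) 0 with he
      have hmp := measurePreserving_piFinSuccAbove (fun i => gaussianReal (u i) s) 0
      set prodM := (gaussianReal (u 0) s).prod
        (Measure.pi fun j => gaussianReal (u ((0 : Fin (n+1)).succAbove j)) s) with hprodM
      have hpi : (Measure.pi fun i => gaussianReal (u i) s) = Measure.map e.symm prodM := by
        rw [← hmp.map_eq, MeasurableEquiv.map_symm_map]
      have hT : Measurable (fun x : Fin (n+1) → ℝ => ∑ i, c i * x i) := by
        apply Finset.measurable_sum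
        intro i _
        exact (measurable_pi_apply i).const_mul _
      rw [hpi, Measure.map_map hT e.symm.measurable]
      have hcomp : ((fun x : Fin (n+1) → ℝ => ∑ i, c i * x i) ∘ e.symm)
          = (fun q : ℝ × ℝ => q.1 + q.2) ∘
            (Prod.map (fun a : ℝ => c 0 * a)
              (fun y : Fin n → ℝ => ∑ j, c (Fin.succ j) * y j)) := by
        ext p
        simp only [Function.comp_apply, Prod.map]
        have h0 : (e.symm p) 0 = p.1 := by
          simp [he, MeasurableEquiv.piFinSuccAbove]
        have hsucc : ∀ j : Fin n, (e.symm p) (Fin.succ j) = p.2 j := by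
          intro j
          have hj : Fin.succ j = (0 : Fin (n+1)).succAbove j := by simp
          rw [hj]
          simp [he, MeasurableEquiv.piFinSuccAbove]
        rw [Fin.sum_univ_succ, h0]
        refine congrArg (fun z => c 0 * p.1 + z) ?_
        exact Finset.sum_congr rfl fun j _ => by rw [hsucc]
      rw [hcomp]
      have hmul : Measurable fun a : ℝ => c 0 * a := measurable_const_mul _
      have htail : Measurable fun y : Fin n → ℝ => ∑ j, c (Fin.succ j) * y j := by
        apply Finset.measurable_sum
        intro j _
        exact (measurable_pi_apply j).const_mul _
      rw [← Measure.map_map (g := fun q : ℝ × ℝ => q.1 + q.2) (measurable_fst.add measurable_snd) (hmul.prodMap htail)]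
      rw [hprodM, ← Measure.map_prod_map _ _ hmul htail]
      have h0succ : ∀ j : Fin n, (0 : Fin (n+1)).succAbove j = Fin.succ j := fun j => by
        simp [Fin.succAbove_zero]
      have htailmap : Measure.map (fun y : Fin n → ℝ => ∑ j, c (Fin.succ j) * y j)
          (Measure.pi fun j => gaussianReal (u ((0 : Fin (n+1)).succAbove j)) s)
          = gaussianReal (∑ j, c (Fin.succ j) * u (Fin.succ j))
              (Real.toNNReal (∑ j, (c (Fin.succ j))^2) * s) := by
        have : (fun j => gaussianReal (u ((0 : Fin (n+1)).succAbove j)) s)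
            = fun j => gaussianReal (u (Fin.succ j)) s := by
          ext1 j; rw [h0succ]
        rw [this]
        exact ih (fun j => c (Fin.succ j)) (fun j => u (Fin.succ j)) s
      rw [htailmap, gaussianReal_map_const_mul (c 0), gauss_conv]
      congr 1
      · rw [Fin.sum_univ_succ]
      · ext
        push_cast
        rw [Fin.sum_univ_succ]
        have h1 : (0:ℝ) ≤ ∑ j, (c (Fin.succ j))^2 := by positivity
        have h2 : (0:ℝ) ≤ (c 0)^2 + ∑ j, (c (Fin.succ j))^2 := by positivity
        rw [Real.coe_toNNReal _ h1, Real.coe_toNNReal _ h2]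
        ring




lemma prod_withDensity {α β : Type*} [MeasurableSpace α] [MeasurableSpace β]
    (μ : Measure α) (ν : Measure β) [SFinite μ] [SFinite ν]
    {f : α → ℝ≥0∞} {g : β → ℝ≥0∞} (hf : Measurable f) (hg : Measurable g) :
    (μ.withDensity f).prod (ν.withDensity g)
      = (μ.prod ν).withDensity (fun p => f p.1 * g p.2) := by
  ext s hs
  have hfg : Measurable fun p : α × β => f p.1 * g p.2 :=
    (hf.comp measurable_fst).mul (hg.comp measurable_snd)
  rw [Measure.prod_apply hs, withDensity_apply _ hs, ← lintegral_indicator hs,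
    lintegral_prod _ (hfg.indicator hs).aemeasurable,
    lintegral_withDensity_eq_lintegral_mul _ hf
      (measurable_measure_prodMk_left (ν := ν.withDensity g) hs)]
  refine lintegral_congr fun x => ?_
  simp only [Pi.mul_apply]
  rw [withDensity_apply _ (measurable_prodMk_left hs), ← lintegral_indicator
    (measurable_prodMk_left hs), ← lintegral_const_mul _ ((hg).indicator
    (measurable_prodMk_left hs))]
  refine lintegral_congr fun y => ?_
  by_cases hxy : (x, y) ∈ s
  · rw [Set.indicator_of_mem hxy, Set.indicator_of_mem (show y ∈ Prod.mk x ⁻¹' s from hxy)]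
  · rw [Set.indicator_of_notMem hxy,
      Set.indicator_of_notMem (show y ∉ Prod.mk x ⁻¹' s from hxy), mul_zero]

lemma map_withDensity_equiv {α β : Type*} [MeasurableSpace α] [MeasurableSpace β]
    (e : α ≃ᵐ β) (μ : Measure α) {f : α → ℝ≥0∞} (hf : Measurable f) :
    Measure.map e (μ.withDensity f) = (Measure.map e μ).withDensity (fun b => f (e.symm b)) := by
  ext s hs
  rw [Measure.map_apply e.measurable hs, withDensity_apply _ (e.measurable hs),
    withDensity_apply _ hs, setLIntegral_map hs
      (show Measurable fun b => f (e.symm b) from hf.comp e.symm.measurable) e.measurable]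
  refine setLIntegral_congr_fun (e.measurable hs) (fun x _ => ?_)
  rw [e.symm_apply_apply]

/-- the likelihood ratio density of `N(b,σ²)` w.r.t. `N(a,σ²)`. -/
def gdens (σ a b : ℝ) (t : ℝ) : ℝ≥0∞ :=
  ENNReal.ofReal (Real.exp (((b - a) * t - (b ^ 2 - a ^ 2) / 2) / σ ^ 2))

lemma measurable_gdens (σ a b : ℝ) : Measurable (gdens σ a b) := by
  apply Measurable.ennreal_ofReal
  apply Measurable.exp
  apply Measurable.div_const
  exact (measurable_id.const_mul _).sub measurable_const

lemma gauss_density1 (σ : ℝ) (hσ : 0 < σ) (a b : ℝ) :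
    gaussianReal b (Real.toNNReal (σ ^ 2)) =
      (gaussianReal a (Real.toNNReal (σ ^ 2))).withDensity (gdens σ a b) := by
  set s : ℝ≥0 := Real.toNNReal (σ ^ 2) with hsdef
  have hs : s ≠ 0 := by
    rw [hsdef]
    simp only [ne_eq, Real.toNNReal_eq_zero, not_le]
    positivity
  have hsr : (s : ℝ) = σ ^ 2 := Real.coe_toNNReal _ (by positivity)
  rw [gaussianReal_of_var_ne_zero b hs, gaussianReal_of_var_ne_zero a hs,
    ← withDensity_mul ℙ (measurable_gaussianPDF a s) (measurable_gdens σ a b)]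
  congr 1
  ext t
  show gaussianPDF b s t = gaussianPDF a s t * gdens σ a b t
  unfold gaussianPDF gdens
  rw [← ENNReal.ofReal_mul (gaussianPDFReal_nonneg a s t)]
  congr 1
  unfold gaussianPDFReal
  conv_rhs => rw [mul_assoc]
  rw [← Real.exp_add]
  congr 1
  rw [hsr]
  have : σ ^ 2 ≠ 0 := by positivity
  field_simp
  ring

lemma pi_gauss_density (σ : ℝ) (hσ : 0 < σ) :
    ∀ (n : ℕ) (u v : Fin n → ℝ),
    (Measure.pi fun i => gaussianReal (v i) (Real.toNNReal (σ ^ 2)))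
      = (Measure.pi fun i => gaussianReal (u i) (Real.toNNReal (σ ^ 2))).withDensity
          (fun x => ∏ i, gdens σ (u i) (v i) (x i)) := by
  intro n
  induction n with
  | zero =>
      intro u v
      have h1 : (fun x : Fin 0 → ℝ => ∏ i, gdens σ (u i) (v i) (x i))
          = (1 : (Fin 0 → ℝ) → ℝ≥0∞) := by
        ext x; simp
      rw [h1, withDensity_one]
      congr 1
      ext i
      exact i.elim0
  | succ n ih =>
      intro u v
      set e := MeasurableEquiv.piFinSuccAbove (fun _ : Fin (n+1) => ℝ) 0 with he
      have hpiu : (Measure.pi fun i => gaussianReal (u i) (Real.toNNReal (σ ^ 2)))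
          = Measure.map e.symm
          ((gaussianReal (u 0) (Real.toNNReal (σ ^ 2))).prod
            (Measure.pi fun j => gaussianReal (u ((0 : Fin (n+1)).succAbove j))
              (Real.toNNReal (σ ^ 2)))) := by
        rw [← (measurePreserving_piFinSuccAbove
          (fun i => gaussianReal (u i) (Real.toNNReal (σ ^ 2))) 0).map_eq,
          MeasurableEquiv.map_symm_map]
      have hpiv : (Measure.pi fun i => gaussianReal (v i) (Real.toNNReal (σ ^ 2)))
          = Measure.map e.symm
          ((gaussianReal (v 0) (Real.toNNReal (σ ^ 2))).prod
            (Measure.pi fun j => gaussianReal (v ((0 : Fin (n+1)).succAbove j))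
              (Real.toNNReal (σ ^ 2)))) := by
        rw [← (measurePreserving_piFinSuccAbove
          (fun i => gaussianReal (v i) (Real.toNNReal (σ ^ 2))) 0).map_eq,
          MeasurableEquiv.map_symm_map]
      have htailmeas : Measurable fun y : Fin n → ℝ =>
          ∏ j, gdens σ (u ((0 : Fin (n+1)).succAbove j))
            (v ((0 : Fin (n+1)).succAbove j)) (y j) := by
        apply Finset.measurable_prod
        intro j _
        exact (measurable_gdens _ _ _).comp (measurable_pi_apply j)
      have hD : Measurable fun p : ℝ × (Fin n → ℝ) =>
          gdens σ (u 0) (v 0) p.1 * ∏ j, gdens σ (u ((0 : Fin (n+1)).succAbove j))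
            (v ((0 : Fin (n+1)).succAbove j)) (p.2 j) :=
        ((measurable_gdens σ (u 0) (v 0)).comp measurable_fst).mul
          (htailmeas.comp measurable_snd)
      rw [hpiv, gauss_density1 σ hσ (u 0) (v 0),
        ih (fun j => u ((0 : Fin (n+1)).succAbove j)) (fun j => v ((0 : Fin (n+1)).succAbove j)),
        prod_withDensity _ _ (measurable_gdens σ (u 0) (v 0)) htailmeas,
        map_withDensity_equiv e.symm _ hD, ← hpiu]
      congr 1
      ext x
      simp only [MeasurableEquiv.symm_symm]
      rw [Fin.prod_univ_succ]
      have h1 : (e x).1 = x 0 := rfl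
      have h2 : ∀ j : Fin n, (e x).2 j = x ((0 : Fin (n+1)).succAbove j) := fun j => rfl
      rw [h1]
      refine congrArg (fun z => gdens σ (u 0) (v 0) (x 0) * z) ?_
      refine Finset.prod_congr rfl fun j _ => ?_
      rw [h2 j]
      have hsj : (0 : Fin (n+1)).succAbove j = Fin.succ j := by simp
      rw [hsj]


lemma PhiE_coe (t : ℝ) : PhiE (t : EReal) = Phi t := by
  unfold PhiE
  rw [if_neg (EReal.coe_ne_bot t), if_neg (EReal.coe_ne_top t), EReal.toReal_coe]

lemma PhiE_bot : PhiE ⊥ = 0 := if_pos rfl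

lemma PhiE_top : PhiE ⊤ = 1 := by
  unfold PhiE
  rw [if_neg (by simp), if_pos rfl]

lemma PhiE_nonneg (x : EReal) : 0 ≤ PhiE x := by
  induction x using EReal.rec with
  | bot => rw [PhiE_bot]
  | coe r => rw [PhiE_coe]; exact (Phi_pos r).le
  | top => rw [PhiE_top]; norm_num

lemma PhiInv_eq {t q : ℝ} (hq : 0 < q) (h : Phi t = q) : PhiInv q = (t : EReal) := by
  apply le_antisymm
  · apply sInf_le
    show q ≤ PhiE (t : EReal)
    rw [PhiE_coe, h]
  · apply le_sInf
    intro x hx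
    induction x using EReal.rec with
    | bot =>
        exfalso
        have : q ≤ PhiE ⊥ := hx
        rw [PhiE_bot] at this
        linarith
    | coe r =>
        have hx' : q ≤ Phi r := by
          have : q ≤ PhiE (r : EReal) := hx
          rwa [PhiE_coe] at this
        by_contra hcon
        push_neg at hcon
        have hrt : r < t := EReal.coe_lt_coe_iff.1 hcon
        have := Phi_strictMono hrt
        rw [h] at this
        linarith
    | top => exact le_top

lemma NP_lemma {α : Type*} [MeasurableSpace α] (μ : Measure α) [IsFiniteMeasure μ]
    {L : α → ℝ≥0∞} (hL : Measurable L)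
    (B H : Set α) (hB : MeasurableSet B) (hH : MeasurableSet H) (k : ℝ≥0∞)
    (hupper : ∀ x ∈ B \ H, L x ≤ k) (hlower : ∀ x ∈ H \ B, k ≤ L x)
    (hBH : μ B ≤ μ H) : μ.withDensity L B ≤ μ.withDensity L H := by
  have h2 : μ (B \ H) ≤ μ (H \ B) := by
    have e1 := measure_inter_add_diff (μ := μ) B hH
    have e2 := measure_inter_add_diff (μ := μ) H hB
    rw [Set.inter_comm H B] at e2
    have h3 : μ (B ∩ H) + μ (B \ H) ≤ μ (B ∩ H) + μ (H \ B) := by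
      rw [e1, e2]; exact hBH
    exact (ENNReal.add_le_add_iff_left (measure_ne_top μ _)).1 h3
  have hup : μ.withDensity L (B \ H) ≤ k * μ (B \ H) := by
    rw [withDensity_apply _ (hB.diff hH)]
    calc ∫⁻ x in B \ H, L x ∂μ ≤ ∫⁻ _ in B \ H, k ∂μ := setLIntegral_mono measurable_const hupper
      _ = k * μ (B \ H) := setLIntegral_const _ _
  have hlo : k * μ (H \ B) ≤ μ.withDensity L (H \ B) := by
    rw [withDensity_apply _ (hH.diff hB)]
    calc k * μ (H \ B) = ∫⁻ _ in H \ B, k ∂μ := (setLIntegral_const _ _).symm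
      _ ≤ ∫⁻ x in H \ B, L x ∂μ := setLIntegral_mono hL hlower
  calc μ.withDensity L B
      = μ.withDensity L (B ∩ H) + μ.withDensity L (B \ H) :=
        (measure_inter_add_diff B hH).symm
    _ ≤ μ.withDensity L (B ∩ H) + k * μ (B \ H) := add_le_add_right hup _
    _ ≤ μ.withDensity L (B ∩ H) + k * μ (H \ B) := add_le_add_right (mul_le_mul_right h2 k) _
    _ ≤ μ.withDensity L (B ∩ H) + μ.withDensity L (H \ B) := add_le_add_right hlo _
    _ = μ.withDensity L (H ∩ B) + μ.withDensity L (H \ B) := by rw [Set.inter_comm]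
    _ = μ.withDensity L H := measure_inter_add_diff H hB

/-- **Lemma 4.3** (gaussian shift comparison). -/
theorem lemma_4_3 (N : ℕ) (σ : ℝ) (hσ : 0 < σ) (u v : Fin N → ℝ)
    (A : Set (Fin N → ℝ)) (hA : MeasurableSet A) :
    1 - PhiE (PhiInv (1 - (gaussVec u σ A).toReal) +
        ((Real.sqrt (∑ i, (u i - v i) ^ 2) / σ : ℝ) : EReal)) ≤
      (gaussVec v σ A).toReal := by
  have hσ2 : σ ^ 2 ≠ 0 := by positivity
  haveI hPu : IsProbabilityMeasure (gaussVec u σ) := by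
    unfold gaussVec; infer_instance
  haveI hPv : IsProbabilityMeasure (gaussVec v σ) := by
    unfold gaussVec; infer_instance
  set p : ℝ := (gaussVec u σ A).toReal with hp
  have hp0 : 0 ≤ p := ENNReal.toReal_nonneg
  have hp1 : p ≤ 1 := by
    rw [hp]
    calc (gaussVec u σ A).toReal ≤ (1 : ℝ≥0∞).toReal :=
          ENNReal.toReal_mono ENNReal.one_ne_top prob_le_one
      _ = 1 := ENNReal.toReal_one
  have hμuA : gaussVec u σ A = ENNReal.ofReal p :=
    (ENNReal.ofReal_toReal (measure_ne_top _ _)).symm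
  have hdens : gaussVec v σ = (gaussVec u σ).withDensity
      (fun x => ∏ i, gdens σ (u i) (v i) (x i)) := pi_gauss_density σ hσ N u v
  have hLmeas : Measurable fun x : Fin N → ℝ => ∏ i, gdens σ (u i) (v i) (x i) :=
    Finset.measurable_prod _ fun i _ => (measurable_gdens _ _ _).comp (measurable_pi_apply i)
  have hμucA : gaussVec u σ Aᶜ = ENNReal.ofReal (1 - p) := by
    rw [measure_compl hA (measure_ne_top _ _), measure_univ, hμuA, ← ENNReal.ofReal_one,
      ← ENNReal.ofReal_sub _ hp0]
  rcases le_or_gt 1 p with hc1 | hc1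
  · -- p = 1 case
    have hq : 1 - p = 0 := by linarith [le_antisymm hp1 hc1]
    rw [hq]
    have hset : {t : EReal | (0:ℝ) ≤ PhiE t} = univ := eq_univ_of_forall fun x => PhiE_nonneg x
    rw [PhiInv, hset, show sInf (univ : Set EReal) = ⊥ from sInf_univ, EReal.bot_add, PhiE_bot]
    have hvc : gaussVec v σ Aᶜ = 0 := by
      rw [hdens]
      apply withDensity_absolutelyContinuous (gaussVec u σ) _
      rw [hμucA, hq]
      simp
    have hvA : gaussVec v σ A = 1 := by
      have hcmp := measure_compl hA (measure_ne_top (gaussVec v σ) _)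
      rw [hvc, measure_univ] at hcmp
      have h1 : gaussVec v σ A ≤ 1 := prob_le_one
      have h2 : (1:ℝ≥0∞) ≤ gaussVec v σ A := by
        rwa [eq_comm, tsub_eq_zero_iff_le] at hcmp
      exact le_antisymm h1 h2
    rw [hvA]
    norm_num
  rcases le_or_gt p 0 with hc2 | hc2
  · -- p = 0 case
    have hpeq : p = 0 := le_antisymm hc2 hp0
    rw [hpeq, sub_zero]
    have hset : {t : EReal | (1:ℝ) ≤ PhiE t} = {⊤} := by
      ext x
      simp only [mem_setOf_eq, mem_singleton_iff]
      constructor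
      · intro hx
        induction x using EReal.rec with
        | bot => rw [PhiE_bot] at hx; exfalso; linarith
        | coe r => rw [PhiE_coe] at hx; exfalso; linarith [Phi_lt_one r]
        | top => rfl
      · rintro rfl
        rw [PhiE_top]
    rw [PhiInv, hset, sInf_singleton, EReal.top_add_coe, PhiE_top]
    simp [ENNReal.toReal_nonneg]
  · -- main case: 0 < p < 1
    obtain ⟨t, ht⟩ := exists_Phi_eq (q := 1 - p) (by linarith) (by linarith)
    have hPhiInv : PhiInv (1 - p) = (t : EReal) := PhiInv_eq (by linarith) ht
    set W := Real.sqrt (∑ i, (u i - v i) ^ 2) with hWdef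
    by_cases hW0 : W = 0
    · -- u = v
      have hnn : (0:ℝ) ≤ ∑ i, (u i - v i)^2 := by positivity
      have hsum0 : ∑ i, (u i - v i)^2 = 0 := by
        have h := Real.sqrt_eq_zero'.1 hW0
        linarith
      have huv : u = v := by
        funext i
        have hterm := (Finset.sum_eq_zero_iff_of_nonneg
          (fun i _ => sq_nonneg (u i - v i))).1 hsum0 i (Finset.mem_univ i)
        have := sq_eq_zero_iff.1 hterm
        linarith [this]
      rw [hPhiInv, hW0, ← huv]
      rw [show ((0:ℝ)/σ : ℝ) = 0 by norm_num, EReal.coe_zero, add_zero, PhiE_coe, ht]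
      rw [← hp]
      linarith
    · -- u ≠ v
      have hWpos : 0 < W := lt_of_le_of_ne (Real.sqrt_nonneg _) (Ne.symm hW0)
      have hW2 : W ^ 2 = ∑ i, (u i - v i)^2 := Real.sq_sqrt (by positivity)
      set δ := W / σ with hδdef
      have hδpos : 0 < δ := div_pos hWpos hσ
      set c : Fin N → ℝ := fun i => (v i - u i) / (W * σ) with hcdef
      set a : ℝ := ∑ i, c i * u i with hadef
      have hT : Measurable (fun x : Fin N → ℝ => ∑ i, c i * x i) :=
        Finset.measurable_sum _ fun i _ => (measurable_pi_apply i).const_mul _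
      have hcsum : ∑ i, (c i)^2 = 1/σ^2 := by
        have hterm : ∀ i : Fin N, (c i)^2 = (u i - v i)^2 * (1/(W^2 * σ^2)) := by
          intro i
          rw [hcdef]
          field_simp
          ring
        rw [Finset.sum_congr rfl fun i _ => hterm i, ← Finset.sum_mul, ← hW2]
        field_simp
      have hvar : Real.toNNReal (∑ i, (c i)^2) * Real.toNNReal (σ ^ 2) = 1 := by
        rw [hcsum, ← Real.toNNReal_mul (by positivity),
          show (1/σ^2) * σ^2 = 1 by field_simp, Real.toNNReal_one]
      have hlawu : Measure.map (fun x : Fin N → ℝ => ∑ i, c i * x i) (gaussVec u σ)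
          = gaussianReal a 1 := by
        unfold gaussVec
        rw [gauss_map_sum N c u (Real.toNNReal (σ^2)), hvar, hadef]
      have hsumv : ∑ i, c i * v i = a + δ := by
        have h1 : ∀ i : Fin N, c i * v i = c i * u i + (u i - v i)^2 / (W * σ) := by
          intro i
          rw [hcdef]
          field_simp
          ring
        rw [Finset.sum_congr rfl fun i _ => h1 i, Finset.sum_add_distrib, ← Finset.sum_div,
          ← hW2, ← hadef, hδdef]
        congr 1
        rw [pow_two]
        field_simp
      have hlawv : Measure.map (fun x : Fin N → ℝ => ∑ i, c i * x i) (gaussVec v σ)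
          = gaussianReal (a + δ) 1 := by
        unfold gaussVec
        rw [gauss_map_sum N c v (Real.toNNReal (σ^2)), hvar, hsumv]
      set H := (fun x : Fin N → ℝ => ∑ i, c i * x i) ⁻¹' (Ici (a - t)) with hHdef
      have hHm : MeasurableSet H := hT measurableSet_Ici
      have hμuH : gaussVec u σ H = ENNReal.ofReal (1 - p) := by
        rw [hHdef, ← Measure.map_apply hT measurableSet_Ici, hlawu, gauss_Ici,
          show a - (a - t) = t by ring, ← ht, ofReal_Phi]
      have hμvH : gaussVec v σ H = ENNReal.ofReal (Phi (t + δ)) := by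
        rw [hHdef, ← Measure.map_apply hT measurableSet_Ici, hlawv, gauss_Ici,
          show a + δ - (a - t) = t + δ by ring, ofReal_Phi]
      have hLrw : ∀ x : Fin N → ℝ, (∏ i, gdens σ (u i) (v i) (x i))
          = ENNReal.ofReal (Real.exp (δ * (∑ i, c i * x i) - (δ * a + δ^2/2))) := by
        intro x
        unfold gdens
        rw [← ENNReal.ofReal_prod_of_nonneg (fun i _ => (Real.exp_nonneg _)), ← Real.exp_sum]
        congr 1
        rw [Finset.mul_sum, hadef, Finset.mul_sum,
          show δ^2/2 = ∑ i, (u i - v i)^2/(2*σ^2) by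
            rw [hδdef, div_pow, hW2, div_div, mul_comm (σ^2) 2, Finset.sum_div],
          ← Finset.sum_add_distrib, ← Finset.sum_sub_distrib]
        congr 1
        refine Finset.sum_congr rfl fun i _ => ?_
        rw [hcdef, hδdef]
        field_simp
        ring
      have hNP : gaussVec v σ Aᶜ ≤ gaussVec v σ H := by
        rw [hdens]
        apply NP_lemma _ hLmeas Aᶜ H hA.compl hHm
          (ENNReal.ofReal (Real.exp (δ * (a - t) - (δ * a + δ^2/2))))
        · intro x hx
          rw [hLrw]
          apply ENNReal.ofReal_le_ofReal
          apply Real.exp_le_exp.2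
          have hxH : ∑ i, c i * x i < a - t := by
            by_contra hcon
            push_neg at hcon
            exact hx.2 hcon
          have := mul_le_mul_of_nonneg_left hxH.le hδpos.le
          linarith
        · intro x hx
          rw [hLrw]
          apply ENNReal.ofReal_le_ofReal
          apply Real.exp_le_exp.2
          have hxH : a - t ≤ ∑ i, c i * x i := hx.1
          have := mul_le_mul_of_nonneg_left hxH hδpos.le
          linarith
        · rw [hμucA, hμuH]
      have hcompl : (gaussVec v σ Aᶜ).toReal = 1 - (gaussVec v σ A).toReal := by
        rw [measure_compl hA (measure_ne_top _ _), measure_univ,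
          ENNReal.toReal_sub_of_le prob_le_one ENNReal.one_ne_top, ENNReal.toReal_one]
      have hfin : (gaussVec v σ Aᶜ).toReal ≤ Phi (t + δ) := by
        have h := ENNReal.toReal_mono (by rw [hμvH]; exact ENNReal.ofReal_ne_top) hNP
        rw [hμvH, ENNReal.toReal_ofReal (Phi_pos _).le] at h
        exact h
      rw [hPhiInv, show ((t : EReal) + ((W/σ : ℝ) : EReal)) = ((t + W/σ : ℝ) : EReal) from
        (EReal.coe_add _ _).symm, PhiE_coe]
      rw [hcompl] at hfin
      rw [hδdef] at hfin
      linarith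
end
end

section
/- (Theorem 4.4, Gaussian shift theorem of Kuelbs–Li.) Let ν be the standard Gaussian measure on ℝ^N, let B ⊂ ℝ^N be a Borel set, let w ∈ ℝ^N, and let H₊ = {x ∈ ℝ^N : ⟨x, w⟩ ≥ b} be a halfspace (for some b ∈ ℝ) satisfying ν(H₊) = ν(B). Then ν(w + B) ≥ ν(w + H₊). -/
open MeasureTheory ProbabilityTheory Real Set
open scoped ENNReal

noncomputable section

/-- The standard gaussian measure on `ℝ^N`. -/
def stdGaussVec (N : ℕ) : Measure (Fin N → ℝ) :=
  Measure.pi fun _ : Fin N => gaussianReal 0 1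

set_option maxHeartbeats 1000000

namespace KuelbsLiAux

/-- Exponentially tilting density. -/
def tilt (c : ℝ) (x : ℝ) : ℝ≥0∞ := ENNReal.ofReal (Real.exp (c * x - c ^ 2 / 2))

lemma measurable_tilt (c : ℝ) : Measurable (tilt c) :=
  (((measurable_id.const_mul c).sub measurable_const).exp).ennreal_ofReal

lemma gaussianReal_eq_withDensity_tilt (c : ℝ) :
    gaussianReal c 1 = (gaussianReal 0 1).withDensity (tilt c) := by
  rw [gaussianReal_of_var_ne_zero c one_ne_zero, gaussianReal_of_var_ne_zero 0 one_ne_zero,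
    ← withDensity_mul _ (measurable_gaussianPDF 0 1) (measurable_tilt c)]
  congr 1
  funext x
  simp only [Pi.mul_apply, gaussianPDF, tilt,
    ← ENNReal.ofReal_mul (gaussianPDFReal_nonneg 0 1 x)]
  congr 1
  simp only [gaussianPDFReal, NNReal.coe_one, mul_one, sub_zero]
  rw [mul_assoc, ← Real.exp_add]
  congr 1
  rw [Real.exp_eq_exp]
  ring

/-- Product of withDensity measures. -/
lemma prod_withDensity {α β : Type*} [MeasurableSpace α] [MeasurableSpace β]
    (μ : Measure α) (ν : Measure β) [SigmaFinite μ] [SigmaFinite ν]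
    {f : α → ℝ≥0∞} {g : β → ℝ≥0∞} (hf : Measurable f) (hg : Measurable g)
    [SigmaFinite (μ.withDensity f)] [SigmaFinite (ν.withDensity g)] :
    (μ.withDensity f).prod (ν.withDensity g)
      = (μ.prod ν).withDensity (fun p => f p.1 * g p.2) :=
  Measure.prod_eq fun s t hs ht => by
    rw [withDensity_apply _ (hs.prod ht), ← Measure.prod_restrict,
      lintegral_prod_mul hf.aemeasurable hg.aemeasurable,
      ← withDensity_apply _ hs, ← withDensity_apply _ ht]

lemma map_equiv_withDensity {α β : Type*} [MeasurableSpace α] [MeasurableSpace β]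
    (e : α ≃ᵐ β) (μ : Measure α) {F : β → ℝ≥0∞} {G : α → ℝ≥0∞} (hF : Measurable F)
    (hFG : ∀ a, G a = F (e a)) :
    Measure.map e (μ.withDensity G) = (Measure.map e μ).withDensity F := by
  have hG : G = fun a => F (e a) := funext hFG
  subst hG
  ext s hs
  rw [Measure.map_apply e.measurable hs, withDensity_apply _ hs,
    withDensity_apply _ (e.measurable hs), setLIntegral_map hs hF e.measurable]

lemma pi_gauss_eq_withDensity : ∀ (n : ℕ) (c : Fin n → ℝ),
    Measure.pi (fun i => gaussianReal (c i) 1)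
      = (Measure.pi fun _ : Fin n => gaussianReal 0 1).withDensity
          (fun x => ∏ i, tilt (c i) (x i)) := by
  intro n
  induction n with
  | zero =>
    intro c
    have h : (fun i : Fin 0 => gaussianReal (c i) 1) = fun _ => gaussianReal 0 1 :=
      funext fun i => i.elim0
    simp [h, withDensity_one]
  | succ n ih =>
    intro c
    haveI i1 : SigmaFinite ((gaussianReal 0 1).withDensity (tilt (c 0))) := by
      rw [← gaussianReal_eq_withDensity_tilt]; infer_instance
    haveI i2 : SigmaFinite ((Measure.pi fun _ : Fin n => gaussianReal 0 1).withDensity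
        (fun y => ∏ j, tilt (c (Fin.succAbove 0 j)) (y j))) := by
      rw [← ih]; infer_instance
    have htail : Measurable fun y : Fin n → ℝ => ∏ j, tilt (c (Fin.succAbove 0 j)) (y j) :=
      Finset.measurable_prod _ fun j _ => (measurable_tilt _).comp (measurable_pi_apply j)
    have hFull : Measurable fun x : Fin (n + 1) → ℝ => ∏ i, tilt (c i) (x i) :=
      Finset.measurable_prod _ fun i _ => (measurable_tilt _).comp (measurable_pi_apply i)
    calc Measure.pi (fun i => gaussianReal (c i) 1)
        = Measure.map (MeasurableEquiv.piFinSuccAbove (fun _ : Fin (n + 1) => ℝ) 0).symm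
            ((gaussianReal (c 0) 1).prod
            (Measure.pi fun j : Fin n => gaussianReal (c (Fin.succAbove 0 j)) 1)) :=
          (((measurePreserving_piFinSuccAbove (fun i => gaussianReal (c i) 1) 0).symm
            _).map_eq).symm
      _ = Measure.map (MeasurableEquiv.piFinSuccAbove (fun _ : Fin (n + 1) => ℝ) 0).symm
            (((gaussianReal 0 1).withDensity (tilt (c 0))).prod
            ((Measure.pi fun _ : Fin n => gaussianReal 0 1).withDensity
              (fun y => ∏ j, tilt (c (Fin.succAbove 0 j)) (y j)))) := by
          rw [← gaussianReal_eq_withDensity_tilt, ← ih]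
      _ = Measure.map (MeasurableEquiv.piFinSuccAbove (fun _ : Fin (n + 1) => ℝ) 0).symm
            (((gaussianReal 0 1).prod
            (Measure.pi fun _ : Fin n => gaussianReal 0 1)).withDensity
            (fun p => tilt (c 0) p.1 * ∏ j, tilt (c (Fin.succAbove 0 j)) (p.2 j))) := by
          rw [prod_withDensity _ _ (measurable_tilt _) htail]
      _ = (Measure.map (MeasurableEquiv.piFinSuccAbove (fun _ : Fin (n + 1) => ℝ) 0).symm
            ((gaussianReal 0 1).prod
            (Measure.pi fun _ : Fin n => gaussianReal 0 1))).withDensity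
            (fun x => ∏ i, tilt (c i) (x i)) := by
          refine map_equiv_withDensity _ _ hFull fun p => ?_
          rw [Fin.prod_univ_succAbove (fun i => tilt (c i)
            ((MeasurableEquiv.piFinSuccAbove (fun _ : Fin (n + 1) => ℝ) 0).symm p i)) 0]
          simp [MeasurableEquiv.piFinSuccAbove_symm_apply]
      _ = (Measure.pi fun _ : Fin (n + 1) => gaussianReal 0 1).withDensity
            (fun x => ∏ i, tilt (c i) (x i)) := by
          rw [((measurePreserving_piFinSuccAbove
            (fun _ : Fin (n + 1) => gaussianReal 0 1) 0).symm _).map_eq]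

lemma stdGauss_map_sub (N : ℕ) (w : Fin N → ℝ) :
    Measure.pi (fun i => gaussianReal (-(w i)) 1) = (stdGaussVec N).map (fun x => x - w) := by
  refine Measure.pi_eq fun s hs => ?_
  rw [Measure.map_apply (measurable_sub_const w) (MeasurableSet.univ_pi hs)]
  have hpre : (fun x : Fin N → ℝ => x - w) ⁻¹' (univ.pi s)
      = univ.pi (fun i => (fun t : ℝ => t - w i) ⁻¹' (s i)) := by
    ext x
    simp [Set.mem_pi, Pi.sub_apply]
  rw [hpre, stdGaussVec, Measure.pi_pi]
  refine Finset.prod_congr rfl fun i _ => ?_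
  have : gaussianReal (-(w i)) 1 = (gaussianReal 0 1).map (· + (-(w i))) := by
    rw [gaussianReal_map_add_const, zero_add]
  rw [this, Measure.map_apply (measurable_add_const _) (hs i)]
  congr 1

lemma shift_measure (N : ℕ) (w : Fin N → ℝ) {A : Set (Fin N → ℝ)} (hA : MeasurableSet A) :
    stdGaussVec N ((fun x => w + x) '' A)
      = ∫⁻ x in A, ∏ i, tilt (-(w i)) (x i) ∂(stdGaussVec N) := by
  have himg : (fun x => w + x) '' A = (fun x : Fin N → ℝ => x - w) ⁻¹' A := by
    ext y
    constructor
    · rintro ⟨a, ha, rfl⟩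
      simpa [add_sub_cancel_left] using ha
    · intro h
      exact ⟨y - w, h, by simp⟩
  rw [himg, ← Measure.map_apply (measurable_sub_const w) hA, ← stdGauss_map_sub,
    pi_gauss_eq_withDensity N (fun i => -(w i))]
  rw [withDensity_apply _ hA]
  rfl

end KuelbsLiAux


open KuelbsLiAux

/-- **Theorem 4.4** (gaussian shift theorem of Kuelbs–Li): among all sets of a given
standard gaussian measure, shifted halfspaces orthogonal to the shift have minimal
shifted measure. -/
theorem gaussian_shift_kuelbs_li (N : ℕ) (B : Set (Fin N → ℝ)) (hB : MeasurableSet B)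
    (w : Fin N → ℝ) (b : ℝ)
    (hH : stdGaussVec N {x : Fin N → ℝ | b ≤ ∑ i, x i * w i} = stdGaussVec N B) :
    stdGaussVec N ((fun x => w + x) '' {x : Fin N → ℝ | b ≤ ∑ i, x i * w i}) ≤
      stdGaussVec N ((fun x => w + x) '' B) := by
  classical
  have hf : Measurable fun x : Fin N → ℝ => ∑ i, x i * w i :=
    Finset.measurable_sum _ fun i _ => by fun_prop
  have hHm : MeasurableSet {x : Fin N → ℝ | b ≤ ∑ i, x i * w i} :=
    measurableSet_le measurable_const hf
  rw [shift_measure N w hHm, shift_measure N w hB]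
  set H := {x : Fin N → ℝ | b ≤ ∑ i, x i * w i} with hHdef
  set ν := stdGaussVec N with hν
  haveI : IsFiniteMeasure ν := by rw [hν, stdGaussVec]; infer_instance
  set ρ : (Fin N → ℝ) → ℝ≥0∞ := fun x => ∏ i, tilt (-(w i)) (x i) with hρdef
  have hρm : Measurable ρ := Finset.measurable_prod _ fun i _ =>
    (measurable_tilt _).comp (measurable_pi_apply i)
  set D := ∑ i, (w i) ^ 2 / 2 with hD
  set κ : ℝ≥0∞ := ENNReal.ofReal (Real.exp (-b - D)) with hκ
  have hρ_eq : ∀ x, ρ x = ENNReal.ofReal (Real.exp (-(∑ i, x i * w i) - D)) := by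
    intro x
    rw [hρdef]
    simp only [tilt]
    rw [← ENNReal.ofReal_prod_of_nonneg (fun i _ => (Real.exp_pos _).le), ← Real.exp_sum]
    congr 1
    rw [Finset.sum_congr rfl fun i (_ : i ∈ Finset.univ) =>
      (show (-(w i)) * x i - (-(w i)) ^ 2 / 2 = -(x i * w i) - w i ^ 2 / 2 by ring),
      Finset.sum_sub_distrib, Finset.sum_neg_distrib, hD]
  have hle : ∀ x ∈ H, ρ x ≤ κ := by
    intro x hx
    rw [hρ_eq x, hκ]
    have hbx : b ≤ ∑ i, x i * w i := hx
    exact ENNReal.ofReal_le_ofReal (Real.exp_le_exp.2 (by linarith))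
  have hge : ∀ x ∈ B \ H, κ ≤ ρ x := by
    intro x hx
    rw [hρ_eq x, hκ]
    have hbx : ¬ b ≤ ∑ i, x i * w i := hx.2
    have hbx' := not_le.1 hbx
    exact ENNReal.ofReal_le_ofReal (Real.exp_le_exp.2 (by linarith))
  have hdiff : ν (H \ B) = ν (B \ H) := by
    have h1 : ν (H \ B) + ν (H ∩ B) = ν H := measure_diff_add_inter H hB
    have h2 : ν (B \ H) + ν (B ∩ H) = ν B := measure_diff_add_inter B hHm
    rw [inter_comm] at h2
    have h3 : ν (H \ B) + ν (H ∩ B) = ν (B \ H) + ν (H ∩ B) :=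
      h1.trans (hH.trans h2.symm)
    exact WithTop.add_right_cancel (measure_ne_top ν (H ∩ B)) h3
  calc ∫⁻ x in H, ρ x ∂ν
      = ∫⁻ x in H \ B, ρ x ∂ν + ∫⁻ x in H ∩ B, ρ x ∂ν := by
        rw [← lintegral_union (hHm.inter hB) Set.disjoint_sdiff_inter, Set.diff_union_inter]
    _ ≤ κ * ν (H \ B) + ∫⁻ x in H ∩ B, ρ x ∂ν := by
        have h4 : ∫⁻ x in H \ B, ρ x ∂ν ≤ ∫⁻ _ in H \ B, κ ∂ν :=
          setLIntegral_mono measurable_const fun x hx => hle x hx.1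
        rw [setLIntegral_const] at h4
        exact add_le_add_left h4 _
    _ = κ * ν (B \ H) + ∫⁻ x in B ∩ H, ρ x ∂ν := by rw [hdiff, Set.inter_comm]
    _ ≤ ∫⁻ x in B \ H, ρ x ∂ν + ∫⁻ x in B ∩ H, ρ x ∂ν := by
        have h5 : ∫⁻ _ in B \ H, κ ∂ν ≤ ∫⁻ x in B \ H, ρ x ∂ν :=
          setLIntegral_mono hρm fun x hx => hge x hx
        rw [setLIntegral_const] at h5
        exact add_le_add_left h5 _
    _ = ∫⁻ x in B, ρ x ∂ν := by
        rw [← lintegral_union (hB.inter hHm) Set.disjoint_sdiff_inter, Set.diff_union_inter]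
end
end

section
/- (Covering-number lower bound for B₁^d ∩ rB₂^d, Section 5.) There exist absolute constants c₁ ∈ (0,1) and c₂ > 0 such that the following holds. For every dimension d and every r with 1/√d ≤ r ≤ 1 such that k := 1/r² is an integer, log N(B₁^d ∩ rB₂^d, c₁ r B₂^d) ≥ c₂ · log(e d r²)/r², where N(A, εB₂^d) is the minimal number of Euclidean balls of radius ε needed to cover A. -/
open MeasureTheory Set

noncomputable section

/-- Covering number of a set `A ⊆ ℝ^d` by Euclidean balls of radius `ε`. -/
def covNumE {d : ℕ} (A : Set (EuclideanSpace ℝ (Fin d))) (ε : ℝ) : ℕ :=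
  sInf {n : ℕ | ∃ C : Finset (EuclideanSpace ℝ (Fin d)), C.card ≤ n ∧
    ∀ x ∈ A, ∃ c ∈ C, dist x c ≤ ε}

/-- The unit ball of `ℓ₁^d`. -/
def B1 (d : ℕ) : Set (EuclideanSpace ℝ (Fin d)) := {x | ∑ i, |x i| ≤ 1}

set_option maxHeartbeats 1000000

open Finset


variable {k q s : ℕ}

/-- auxiliary: value list of `w` on `D`, padded to length `s`. -/
def valOn (hq : 0 < q) (s : ℕ) (D : Finset (Fin k)) (w : Fin k → Fin q) : Fin s → Fin q :=
  fun j => if h : (j : ℕ) < D.card then w (D.orderEmbOfFin rfl ⟨j, h⟩) else ⟨0, hq⟩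

lemma hamming_ball_card (hq : 0 < q) (c : Fin k → Fin q) :
    (univ.filter fun w : Fin k → Fin q => hammingDist w c ≤ s).card ≤ 2 ^ k * q ^ s := by
  classical
  set D : (Fin k → Fin q) → Finset (Fin k) := fun w => univ.filter fun i => w i ≠ c i with hD
  have hcard : ∀ w : Fin k → Fin q, (D w).card = hammingDist w c := fun w => rfl
  have key : (univ.filter fun w : Fin k → Fin q => hammingDist w c ≤ s).card ≤
      (univ : Finset (Finset (Fin k) × (Fin s → Fin q))).card := by
    apply Finset.card_le_card_of_injOn (fun w => (D w, valOn hq s (D w) w))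
      (fun _ _ => mem_univ _)
    intro w hw w' hw' heq
    simp only [Finset.coe_filter, Set.mem_setOf_eq] at hw hw'
    replace hw : hammingDist w c ≤ s := by tauto
    replace hw' : hammingDist w' c ≤ s := by tauto
    have hDe : D w = D w' := congrArg Prod.fst heq
    have hve : valOn hq s (D w) w = valOn hq s (D w) w' := by
      have h2 := congrArg Prod.snd heq
      simp only at h2
      rwa [← hDe] at h2
    funext i
    by_cases hi : i ∈ D w
    · have hs : (D w).card ≤ s := by rw [hcard]; exact hw
      have : i ∈ Set.range ((D w).orderEmbOfFin rfl) := by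
        rw [Finset.range_orderEmbOfFin]; exact_mod_cast hi
      obtain ⟨j, hj⟩ := this
      have hjs : (j : ℕ) < s := lt_of_lt_of_le j.2 hs
      have h1 : valOn hq s (D w) w ⟨j, hjs⟩ = w i := by
        rw [valOn, dif_pos (show ((⟨(j:ℕ), hjs⟩ : Fin s) : ℕ) < (D w).card from j.2)]
        exact congrArg w hj
      have h2 : valOn hq s (D w) w' ⟨j, hjs⟩ = w' i := by
        rw [valOn, dif_pos (show ((⟨(j:ℕ), hjs⟩ : Fin s) : ℕ) < (D w).card from j.2)]
        exact congrArg w' hj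
      rw [← h1, hve, h2]
    · have h1 : w i = c i := by
        by_contra hne
        exact hi (by simp [hD, hne])
      have h2 : w' i = c i := by
        by_contra hne
        exact (hDe ▸ hi) (by simp [hD, hne])
      rw [h1, h2]
  calc (univ.filter fun w : Fin k → Fin q => hammingDist w c ≤ s).card
      ≤ (univ : Finset (Finset (Fin k) × (Fin s → Fin q))).card := key
    _ = 2 ^ k * q ^ s := by
        simp [Fintype.card_finset, Fintype.card_fun]

lemma exists_code (k q s : ℕ) (hq : 0 < q) :
    ∃ C : Finset (Fin k → Fin q),
      (∀ a ∈ C, ∀ b ∈ C, a ≠ b → s + 1 ≤ hammingDist a b) ∧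
      q ^ k ≤ C.card * (2 ^ k * q ^ s) := by
  classical
  set P : Finset (Fin k → Fin q) → Prop :=
    fun C => ∀ a ∈ C, ∀ b ∈ C, a ≠ b → s + 1 ≤ hammingDist a b with hP
  set 𝒞 : Finset (Finset (Fin k → Fin q)) :=
    (univ : Finset (Fin k → Fin q)).powerset.filter P with h𝒞
  have hne : 𝒞.Nonempty := ⟨∅, by simp [h𝒞, hP]⟩
  obtain ⟨C, hC, hmax⟩ := Finset.exists_max_image 𝒞 Finset.card hne
  have hCP : P C := (Finset.mem_filter.mp hC).2
  refine ⟨C, hCP, ?_⟩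
  have hcover : ∀ w : Fin k → Fin q, ∃ c ∈ C, hammingDist w c ≤ s := by
    intro w
    by_contra hcon
    push_neg at hcon
    have hwC : w ∉ C := by
      intro hwC
      have := hcon w hwC
      simp [hammingDist_self] at this
    have hins : insert w C ∈ 𝒞 := by
      refine Finset.mem_filter.mpr ⟨by simp, ?_⟩
      intro a ha b hb hab
      rcases Finset.mem_insert.mp ha with ha' | ha'
      · rcases Finset.mem_insert.mp hb with hb' | hb'
        · exact absurd (ha'.trans hb'.symm) hab
        · subst ha'; exact hcon b hb'
      · rcases Finset.mem_insert.mp hb with hb' | hb'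
        · subst hb'; rw [hammingDist_comm]; exact hcon a ha'
        · exact hCP a ha' b hb' hab
    have := hmax _ hins
    rw [Finset.card_insert_of_notMem hwC] at this
    omega
  have hsub : (univ : Finset (Fin k → Fin q)) ⊆
      C.biUnion fun c => univ.filter fun w => hammingDist w c ≤ s := by
    intro w _
    obtain ⟨c, hc, hwc⟩ := hcover w
    exact Finset.mem_biUnion.mpr ⟨c, hc, by simp [hwc]⟩
  calc q ^ k = (univ : Finset (Fin k → Fin q)).card := by simp [Fintype.card_fun]
    _ ≤ (C.biUnion fun c => univ.filter fun w => hammingDist w c ≤ s).card :=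
        Finset.card_le_card hsub
    _ ≤ ∑ c ∈ C, (univ.filter fun w : Fin k → Fin q => hammingDist w c ≤ s).card :=
        Finset.card_biUnion_le
    _ ≤ C.card * (2 ^ k * q ^ s) := by
        rw [← smul_eq_mul]
        exact Finset.sum_le_card_nsmul _ _ _ fun c _ => hamming_ball_card hq c




lemma regimeI_points {d k q : ℕ} (hq : 0 < q) (hkq : k * q ≤ d) {r : ℝ} (hr : 0 < r)
    (hkr : (k : ℝ) * r ^ 2 = 1) (s : ℕ) :
    ∃ P : Finset (EuclideanSpace ℝ (Fin d)),
      (↑P ⊆ B1 d ∩ Metric.closedBall 0 r) ∧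
      (∀ p ∈ P, ∀ p' ∈ P, p ≠ p' → Real.sqrt (s+1) * r ^ 2 ≤ dist p p') ∧
      q ^ k ≤ P.card * (2 ^ k * q ^ s) := by
  classical
  obtain ⟨C, hCsep, hCcard⟩ := exists_code k q s hq
  -- embedding of block-coordinates into `Fin d`
  have hemb : ∀ (j : Fin k) (a : Fin q), (j : ℕ) * q + (a : ℕ) < d := by
    intro j a
    calc (j : ℕ) * q + (a : ℕ) < (j : ℕ) * q + q := by omega
      _ = ((j : ℕ) + 1) * q := by ring
      _ ≤ k * q := Nat.mul_le_mul_right q j.2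
      _ ≤ d := hkq
  set emb : Fin k → Fin q → Fin d := fun j a => ⟨(j : ℕ) * q + (a : ℕ), hemb j a⟩ with hembdef
  have hembinj : ∀ (j j' : Fin k) (a a' : Fin q), emb j a = emb j' a' → j = j' ∧ a = a' := by
    intro j j' a a' h
    have hval : (j : ℕ) * q + (a : ℕ) = (j' : ℕ) * q + (a' : ℕ) := congrArg Fin.val h
    have ha : (a : ℕ) < q := a.2
    have ha' : (a' : ℕ) < q := a'.2
    have hj : (j : ℕ) = (j' : ℕ) := by
      rcases Nat.lt_trichotomy (j : ℕ) (j' : ℕ) with h' | h' | h'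
      · nlinarith [Nat.succ_le_of_lt h']
      · exact h'
      · nlinarith [Nat.succ_le_of_lt h']
    constructor
    · exact Fin.ext hj
    · apply Fin.ext; rw [hj] at hval; omega
  set S : (Fin k → Fin q) → Finset (Fin d) := fun w => univ.image fun j => emb j (w j) with hSdef
  have hScard : ∀ w, (S w).card = k := by
    intro w
    rw [hSdef]
    rw [Finset.card_image_of_injective _ fun j j' h => (hembinj _ _ _ _ h).1]
    simp
  set x : (Fin k → Fin q) → EuclideanSpace ℝ (Fin d) :=
    fun w => WithLp.toLp 2 (fun i => if i ∈ S w then r ^ 2 else 0) with hxdef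
  -- sums of nonneg functions of coordinates
  have hsum : ∀ w (g : ℝ → ℝ), g 0 = 0 →
      ∑ i, g (x w i) = (k : ℝ) * g (r ^ 2) := by
    intro w g hg0
    have : ∀ i, g (x w i) = if i ∈ S w then g (r ^ 2) else 0 := by
      intro i; rw [hxdef]; simp only [PiLp.toLp_apply]; split <;> simp [hg0]
    simp_rw [this]
    rw [Finset.sum_ite_mem, Finset.univ_inter, Finset.sum_const, hScard w, nsmul_eq_mul]
  have hmem : ∀ w, x w ∈ B1 d ∩ Metric.closedBall 0 r := by
    intro w
    constructor
    · show ∑ i, |x w i| ≤ 1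
      have := hsum w (fun t => |t|) abs_zero
      simp only at this
      rw [this, abs_of_nonneg (sq_nonneg r)]
      rw [hkr]
    · rw [Metric.mem_closedBall, EuclideanSpace.dist_eq]
      have h0 : ∀ i, (0 : EuclideanSpace ℝ (Fin d)) i = 0 := fun _ => rfl
      have hx2 : ∑ i, dist (x w i) ((0 : EuclideanSpace ℝ (Fin d)) i) ^ 2 = r ^ 2 := by
        have := hsum w (fun t => t ^ 2) (by norm_num)
        simp only at this
        calc ∑ i, dist (x w i) ((0 : EuclideanSpace ℝ (Fin d)) i) ^ 2
            = ∑ i, (x w i) ^ 2 := by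
              refine Finset.sum_congr rfl fun i _ => ?_
              rw [h0, dist_zero_right, Real.norm_eq_abs, sq_abs]
          _ = (k : ℝ) * (r ^ 2) ^ 2 := this
          _ = ((k : ℝ) * r ^ 2) * r ^ 2 := by ring
          _ = r ^ 2 := by rw [hkr, one_mul]
      rw [hx2, Real.sqrt_sq hr.le]
  -- distance lower bound
  have hdist : ∀ w ∈ C, ∀ w' ∈ C, w ≠ w' → Real.sqrt (s+1) * r ^ 2 ≤ dist (x w) (x w') := by
    intro w hw w' hw' hne
    have hham : s + 1 ≤ hammingDist w w' := hCsep w hw w' hw' hne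
    -- injection of difference set into `S w \ S w'`
    have hsub : (univ.filter fun j => w j ≠ w' j).card ≤ ((S w) \ (S w')).card := by
      apply Finset.card_le_card_of_injOn (fun j => emb j (w j))
      · intro j hj
        rw [Finset.mem_coe, Finset.mem_filter] at hj
        rw [Finset.mem_coe, Finset.mem_sdiff]
        constructor
        · rw [hSdef]; exact Finset.mem_image.mpr ⟨j, mem_univ j, rfl⟩
        · rw [hSdef]
          intro hmem'
          obtain ⟨j', _, hj'⟩ := Finset.mem_image.mp hmem'
          obtain ⟨rfl, hval⟩ := hembinj _ _ _ _ hj'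
          exact hj.2 hval.symm
      · intro j _ j' _ h
        exact (hembinj _ _ _ _ h).1
    have hcard : (s + 1 : ℝ) ≤ (((S w) \ (S w')).card : ℝ) := by
      have h1 : s + 1 ≤ ((S w) \ (S w')).card := le_trans hham hsub
      exact_mod_cast h1
    have hterm : ∀ i ∈ (S w) \ (S w'), (r ^ 2) ^ 2 ≤ dist (x w i) (x w' i) ^ 2 := by
      intro i hi
      rw [Finset.mem_sdiff] at hi
      have : x w i = r ^ 2 := by rw [hxdef]; simp [hi.1]
      have h2 : x w' i = 0 := by rw [hxdef]; simp [hi.2]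
      rw [this, h2, Real.dist_eq, sub_zero, sq_abs]
    have hsumge : (s + 1 : ℝ) * (r ^ 2) ^ 2 ≤ ∑ i, dist (x w i) (x w' i) ^ 2 := by
      calc (s + 1 : ℝ) * (r ^ 2) ^ 2
          ≤ (((S w) \ (S w')).card : ℝ) * (r ^ 2) ^ 2 := by
            apply mul_le_mul_of_nonneg_right hcard (by positivity)
        _ = ∑ i ∈ (S w) \ (S w'), (r ^ 2) ^ 2 := by rw [Finset.sum_const, nsmul_eq_mul]
        _ ≤ ∑ i ∈ (S w) \ (S w'), dist (x w i) (x w' i) ^ 2 := Finset.sum_le_sum hterm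
        _ ≤ ∑ i, dist (x w i) (x w' i) ^ 2 := by
            apply Finset.sum_le_sum_of_subset_of_nonneg (Finset.subset_univ _)
            intro i _ _; positivity
    rw [EuclideanSpace.dist_eq]
    calc Real.sqrt (s+1) * r ^ 2 = Real.sqrt ((s+1) * (r ^ 2) ^ 2) := by
          rw [Real.sqrt_mul (by positivity), Real.sqrt_sq (sq_nonneg r)]
      _ ≤ Real.sqrt (∑ i, dist (x w i) (x w' i) ^ 2) := Real.sqrt_le_sqrt hsumge
  -- injectivity
  have hxinj : Set.InjOn x ↑C := by
    intro w hw w' hw' hxe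
    by_contra hne
    have := hdist w hw w' hw' hne
    rw [hxe, dist_self] at this
    nlinarith [Real.sqrt_nonneg ((s : ℝ)+1), Real.sq_sqrt (by positivity : ((s:ℝ)+1) ≥ 0),
      sq_nonneg r, hr]
  refine ⟨C.image x, ?_, ?_, ?_⟩
  · intro p hp
    simp only [Finset.coe_image, Set.mem_image] at hp
    obtain ⟨w, _, rfl⟩ := hp
    exact hmem w
  · intro p hp p' hp' hne
    obtain ⟨w, hw, rfl⟩ := Finset.mem_image.mp hp
    obtain ⟨w', hw', rfl⟩ := Finset.mem_image.mp hp'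
    exact hdist w hw w' hw' (fun h => hne (by rw [h]))
  · rw [Finset.card_image_of_injOn hxinj]
    exact hCcard


lemma covSet_nonempty {d : ℕ} (A : Set (EuclideanSpace ℝ (Fin d))) {R ε : ℝ} (hε : 0 < ε)
    (hA : A ⊆ Metric.closedBall 0 R) :
    {n : ℕ | ∃ C : Finset (EuclideanSpace ℝ (Fin d)), C.card ≤ n ∧
      ∀ x ∈ A, ∃ c ∈ C, dist x c ≤ ε}.Nonempty := by
  classical
  have htb : TotallyBounded A :=
    (isCompact_closedBall (0 : EuclideanSpace ℝ (Fin d)) R).totallyBounded.subset hA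
  obtain ⟨t, htf, hcov⟩ := (Metric.totallyBounded_iff.mp htb) ε hε
  refine ⟨htf.toFinset.card, htf.toFinset, le_rfl, ?_⟩
  intro x hx
  obtain ⟨c, hc, hxc⟩ := Set.mem_iUnion₂.mp (hcov hx)
  exact ⟨c, htf.mem_toFinset.mpr hc, le_of_lt (Metric.mem_ball.mp hxc)⟩

lemma packing_le {d : ℕ} {A : Set (EuclideanSpace ℝ (Fin d))} {ε : ℝ}
    (P : Finset (EuclideanSpace ℝ (Fin d))) (hP : ↑P ⊆ A)
    (hsep : ∀ p ∈ P, ∀ p' ∈ P, p ≠ p' → 2 * ε < dist p p')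
    {n : ℕ} (C : Finset (EuclideanSpace ℝ (Fin d))) (hCn : C.card ≤ n)
    (hcov : ∀ x ∈ A, ∃ c ∈ C, dist x c ≤ ε) : P.card ≤ n := by
  classical
  have hch : ∀ p : EuclideanSpace ℝ (Fin d), p ∈ P → ∃ c ∈ C, dist p c ≤ ε :=
    fun p hp => hcov p (hP hp)
  choose! f hf1 hf2 using hch
  have : P.card ≤ C.card := by
    apply Finset.card_le_card_of_injOn f (fun p hp => hf1 p hp)
    intro p hp p' hp' hfe
    by_contra hne
    have h1 : dist p p' ≤ dist p (f p) + dist p' (f p') := by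
      calc dist p p' ≤ dist p (f p) + dist p' (f p) := dist_triangle_right p p' (f p)
        _ = dist p (f p) + dist p' (f p') := by rw [hfe]
    have := hsep p hp p' hp' hne
    have h2 := hf2 p hp
    have h3 := hf2 p' hp'
    linarith
  omega

lemma volumetric_lb {d k : ℕ} (hkd : k ≤ d) {r ε : ℝ} (hr : 0 < r) (hε : 0 < ε)
    (hkr : (k : ℝ) * r ^ 2 = 1)
    (C : Finset (EuclideanSpace ℝ (Fin d)))
    (hcov : ∀ x ∈ B1 d ∩ Metric.closedBall 0 r, ∃ c ∈ C, dist x c ≤ ε) :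
    (r / (2 * ε)) ^ k ≤ (C.card : ℝ) := by
  classical
  set T : EuclideanSpace ℝ (Fin k) → EuclideanSpace ℝ (Fin d) :=
    fun z => WithLp.toLp 2 (fun i : Fin d => if h : (i : ℕ) < k then z ⟨(i : ℕ), h⟩ else 0) with hTdef
  have hTsum : ∀ (G : ℝ → ℝ), G 0 = 0 → ∀ z z' : EuclideanSpace ℝ (Fin k),
      ∑ i, G (T z i - T z' i) = ∑ j, G (z j - z' j) := by
    intro G hG0 z z'
    set F : ℕ → ℝ := fun n => if h : n < k then G (z ⟨n, h⟩ - z' ⟨n, h⟩) else 0 with hF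
    have h1 : ∀ i : Fin d, G (T z i - T z' i) = F (i : ℕ) := by
      intro i
      by_cases h : (i : ℕ) < k
      · simp only [hTdef, hF, PiLp.toLp_apply, dif_pos h]
      · simp only [hTdef, hF, PiLp.toLp_apply, dif_neg h, sub_zero, hG0]
    calc ∑ i : Fin d, G (T z i - T z' i) = ∑ i : Fin d, F (i : ℕ) :=
          Finset.sum_congr rfl fun i _ => h1 i
      _ = ∑ i ∈ Finset.range d, F i := Fin.sum_univ_eq_sum_range F d
      _ = ∑ i ∈ Finset.range k, F i := by
          refine (Finset.sum_subset (Finset.range_subset_range.mpr hkd) ?_).symm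
          intro i _ hik
          rw [Finset.mem_range] at hik
          exact dif_neg hik
      _ = ∑ j : Fin k, F (j : ℕ) := (Fin.sum_univ_eq_sum_range F k).symm
      _ = ∑ j, G (z j - z' j) := by
          refine Finset.sum_congr rfl fun j _ => ?_
          simp only [hF, dif_pos j.2, Fin.eta]
  have hT0 : T 0 = 0 := by
    ext i
    simp only [hTdef, PiLp.toLp_apply]
    split <;> rfl
  have hTdist : ∀ z z' : EuclideanSpace ℝ (Fin k), dist (T z) (T z') = dist z z' := by
    intro z z'
    rw [EuclideanSpace.dist_eq, EuclideanSpace.dist_eq]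
    congr 1
    have h1 : ∀ (a b : ℝ), dist a b ^ 2 = (a - b) ^ 2 := by
      intro a b; rw [Real.dist_eq, sq_abs]
    calc ∑ i, dist (T z i) (T z' i) ^ 2 = ∑ i, (T z i - T z' i) ^ 2 :=
          Finset.sum_congr rfl fun i _ => h1 _ _
      _ = ∑ j, (z j - z' j) ^ 2 := hTsum (fun t => t ^ 2) (by norm_num) z z'
      _ = ∑ j, dist (z j) (z' j) ^ 2 := (Finset.sum_congr rfl fun j _ => (h1 _ _).symm)
  have hnorm : ∀ z : EuclideanSpace ℝ (Fin k), z ∈ Metric.closedBall 0 r →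
      (∑ j, (z j) ^ 2 ≤ r ^ 2) := by
    intro z hz
    rw [Metric.mem_closedBall] at hz
    have h1 : dist z 0 ^ 2 = ∑ j, (z j) ^ 2 := by
      rw [EuclideanSpace.dist_eq, Real.sq_sqrt (by positivity)]
      refine Finset.sum_congr rfl fun j _ => ?_
      have : (0 : EuclideanSpace ℝ (Fin k)) j = 0 := rfl
      rw [this, Real.dist_eq, sub_zero, sq_abs]
    nlinarith [dist_nonneg (x := z) (y := (0 : EuclideanSpace ℝ (Fin k)))]
  have hTmem : ∀ z : EuclideanSpace ℝ (Fin k), z ∈ Metric.closedBall 0 r →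
      T z ∈ B1 d ∩ Metric.closedBall 0 r := by
    intro z hz
    constructor
    · show ∑ i, |T z i| ≤ 1
      have h1 : ∑ i, |T z i| = ∑ j, |z j| := by
        have := hTsum (fun t => |t|) abs_zero z 0
        simpa [hT0] using this
      rw [h1]
      have hcs := Finset.sum_mul_sq_le_sq_mul_sq Finset.univ (fun j : Fin k => |z j|)
        (fun _ => 1)
      simp only [mul_one, one_pow, Finset.sum_const, Finset.card_univ, Fintype.card_fin,
        nsmul_eq_mul, sq_abs] at hcs
      have h2 : (∑ j, |z j|) ^ 2 ≤ 1 := by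
        calc (∑ j, |z j|) ^ 2 ≤ (∑ j, (z j) ^ 2) * k := hcs
          _ ≤ r ^ 2 * k := by
              apply mul_le_mul_of_nonneg_right (hnorm z hz) (by positivity)
          _ = 1 := by rw [← hkr]; ring
      nlinarith [Finset.sum_nonneg (fun j (_ : j ∈ Finset.univ) => abs_nonneg (z j))]
    · rw [Metric.mem_closedBall]
      calc dist (T z) 0 = dist (T z) (T 0) := by rw [hT0]
        _ = dist z 0 := hTdist z 0
        _ ≤ r := Metric.mem_closedBall.mp hz
  -- measure argument
  set μ : Measure (EuclideanSpace ℝ (Fin k)) := volume with hμ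
  set μB := μ (Metric.ball 0 1) with hμB
  have hμB0 : μB ≠ 0 := (Metric.measure_ball_pos μ 0 one_pos).ne'
  have hμBtop : μB ≠ ⊤ := measure_ball_lt_top.ne
  set G : EuclideanSpace ℝ (Fin d) → Set (EuclideanSpace ℝ (Fin k)) :=
    fun c => {z | z ∈ Metric.closedBall 0 r ∧ dist (T z) c ≤ ε} with hG
  have hsub : Metric.closedBall (0 : EuclideanSpace ℝ (Fin k)) r ⊆ ⋃ c ∈ C, G c := by
    intro z hz
    obtain ⟨c, hc, hzc⟩ := hcov (T z) (hTmem z hz)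
    exact Set.mem_biUnion hc ⟨hz, hzc⟩
  have hGle : ∀ c, μ (G c) ≤ ENNReal.ofReal ((2 * ε) ^ k) * μB := by
    intro c
    by_cases hne : (G c).Nonempty
    · obtain ⟨z₀, hz₀⟩ := hne
      have h1 : G c ⊆ Metric.closedBall z₀ (2 * ε) := by
        intro z hzc
        rw [Metric.mem_closedBall]
        calc dist z z₀ = dist (T z) (T z₀) := (hTdist z z₀).symm
          _ ≤ dist (T z) c + dist (T z₀) c := dist_triangle_right _ _ _
          _ ≤ ε + ε := add_le_add hzc.2 hz₀.2
          _ = 2 * ε := by ring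
      calc μ (G c) ≤ μ (Metric.closedBall z₀ (2 * ε)) := measure_mono h1
        _ = ENNReal.ofReal ((2 * ε) ^ Module.finrank ℝ (EuclideanSpace ℝ (Fin k))) * μB :=
            Measure.addHaar_closedBall μ z₀ (by positivity)
        _ = ENNReal.ofReal ((2 * ε) ^ k) * μB := by rw [finrank_euclideanSpace_fin]
    · rw [Set.not_nonempty_iff_eq_empty.mp hne]
      simp
  have hmain : ENNReal.ofReal (r ^ k) * μB ≤
      (C.card : ENNReal) * (ENNReal.ofReal ((2 * ε) ^ k) * μB) := by
    calc ENNReal.ofReal (r ^ k) * μB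
        = ENNReal.ofReal (r ^ Module.finrank ℝ (EuclideanSpace ℝ (Fin k))) * μB := by
          rw [finrank_euclideanSpace_fin]
      _ = μ (Metric.closedBall 0 r) := (Measure.addHaar_closedBall μ 0 hr.le).symm
      _ ≤ μ (⋃ c ∈ C, G c) := measure_mono hsub
      _ ≤ ∑ c ∈ C, μ (G c) := measure_biUnion_finset_le C G
      _ ≤ ∑ c ∈ C, ENNReal.ofReal ((2 * ε) ^ k) * μB := Finset.sum_le_sum fun c _ => hGle c
      _ = (C.card : ENNReal) * (ENNReal.ofReal ((2 * ε) ^ k) * μB) := by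
          rw [Finset.sum_const, nsmul_eq_mul]
  have hmain2 : ENNReal.ofReal (r ^ k) ≤ (C.card : ENNReal) * ENNReal.ofReal ((2 * ε) ^ k) := by
    rw [← mul_assoc] at hmain
    exact (ENNReal.mul_le_mul_iff_left hμB0 hμBtop).mp hmain
  have hmain3 : r ^ k ≤ (C.card : ℝ) * (2 * ε) ^ k := by
    have h1 : (C.card : ENNReal) * ENNReal.ofReal ((2 * ε) ^ k) =
        ENNReal.ofReal ((C.card : ℝ) * (2 * ε) ^ k) := by
      rw [ENNReal.ofReal_mul (by positivity), ENNReal.ofReal_natCast]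
    rw [h1] at hmain2
    exact (ENNReal.ofReal_le_ofReal_iff (by positivity)).mp hmain2
  rw [div_pow, div_le_iff₀ (by positivity)]
  linarith [hmain3]

lemma log_natCast_nonneg (n : ℕ) : 0 ≤ Real.log (n : ℝ) := by
  rcases Nat.eq_zero_or_pos n with rfl | hn
  · simp
  · exact Real.log_nonneg (by exact_mod_cast hn)

/-- **Covering-number lower bound for `B₁^d ∩ rB₂^d`** (Section 5). -/
theorem covering_lower_bound_B1 :
    ∃ c₁ c₂ : ℝ, 0 < c₁ ∧ c₁ < 1 ∧ 0 < c₂ ∧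
      ∀ (d : ℕ) (r : ℝ), 1 / Real.sqrt (d : ℝ) ≤ r → r ≤ 1 →
        (∃ k : ℕ, (k : ℝ) * r ^ 2 = 1) →
        c₂ * (Real.log (Real.exp 1 * (d : ℝ) * r ^ 2) / r ^ 2) ≤
          Real.log (covNumE (B1 d ∩ Metric.closedBall 0 r) (c₁ * r) : ℝ) := by
  classical
  refine ⟨1/8, 1/10, by norm_num, by norm_num, by norm_num, ?_⟩
  rintro d r hrd hr1 ⟨k, hk⟩
  rcases Nat.eq_zero_or_pos d with rfl | hd
  · simp only [Nat.cast_zero, mul_zero, zero_mul, Real.log_zero, zero_div, mul_zero]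
    exact log_natCast_nonneg _
  -- basic facts
  have hd1 : (1 : ℝ) ≤ (d : ℝ) := by exact_mod_cast hd
  have hsd : 0 < Real.sqrt (d : ℝ) := Real.sqrt_pos.mpr (by positivity)
  have hr0 : 0 < r := lt_of_lt_of_le (by positivity) hrd
  have hk0 : k ≠ 0 := by
    rintro rfl; simp at hk
  have hk1 : (1 : ℝ) ≤ (k : ℝ) := by
    have : 1 ≤ k := Nat.one_le_iff_ne_zero.mpr hk0
    exact_mod_cast this
  have hkR : (0 : ℝ) < (k : ℝ) := by linarith
  have hr2 : r ^ 2 = 1 / (k : ℝ) := by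
    field_simp
    linarith [hk]
  have hkd : k ≤ d := by
    have h1 : 1 / (d : ℝ) ≤ r ^ 2 := by
      have := Real.sq_sqrt (le_of_lt (show (0:ℝ) < d by positivity))
      calc 1 / (d : ℝ) = (1 / Real.sqrt d) ^ 2 := by
            rw [div_pow, one_pow, this]
        _ ≤ r ^ 2 := by
            apply pow_le_pow_left₀ (by positivity) hrd
    rw [hr2] at h1
    have : (k : ℝ) ≤ (d : ℝ) := by
      rw [div_le_div_iff₀ (by positivity) hkR] at h1
      linarith
    exact_mod_cast this
  -- the covering number
  set A := B1 d ∩ Metric.closedBall (0 : EuclideanSpace ℝ (Fin d)) r with hA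
  have hε0 : (0 : ℝ) < 1/8 * r := by positivity
  have hAsub : A ⊆ Metric.closedBall 0 1 :=
    Set.inter_subset_right.trans (Metric.closedBall_subset_closedBall hr1)
  have hNon := covSet_nonempty A hε0 hAsub
  have hNmem := Nat.sInf_mem hNon
  set N := covNumE A (1/8 * r) with hNdef
  obtain ⟨C, hCN, hCcov⟩ : ∃ C : Finset (EuclideanSpace ℝ (Fin d)), C.card ≤ N ∧
      ∀ x ∈ A, ∃ c ∈ C, dist x c ≤ 1/8 * r := hNmem
  -- rewrite the LHS
  set u : ℝ := (d : ℝ) * r ^ 2 with hu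
  have hu1 : (1 : ℝ) ≤ u := by
    rw [hu, hr2, mul_one_div, le_div_iff₀ hkR, one_mul]
    exact_mod_cast hkd
  have hu0 : (0 : ℝ) < u := by linarith
  have hudk : u = (d : ℝ) / (k : ℝ) := by rw [hu, hr2]; ring
  have hLHS : (1/10 : ℝ) * (Real.log (Real.exp 1 * (d : ℝ) * r ^ 2) / r ^ 2) =
      1/10 * ((1 + Real.log u) * (k : ℝ)) := by
    have h1 : Real.exp 1 * (d : ℝ) * r ^ 2 = Real.exp 1 * u := by rw [hu]; ring
    rw [h1, Real.log_mul (Real.exp_ne_zero 1) (ne_of_gt hu0), Real.log_exp, hr2]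
    field_simp
  rw [hLHS]
  have hlogu : 0 ≤ Real.log u := Real.log_nonneg hu1
  have hlog2 : (0.6931471803 : ℝ) < Real.log 2 := Real.log_two_gt_d9
  have hlog2' : Real.log 2 ≤ 1 := by
    have h2e : (2 : ℝ) ≤ Real.exp 1 := by
      have := Real.add_one_le_exp (1 : ℝ); linarith
    calc Real.log 2 ≤ Real.log (Real.exp 1) :=
          Real.log_le_log (by norm_num) h2e
      _ = 1 := Real.log_exp 1
  by_cases hreg : 16 * k ≤ d
  · -- Regime I : codes
    set q := d / k with hq
    have hq16 : 16 ≤ q := (Nat.le_div_iff_mul_le (Nat.pos_of_ne_zero hk0)).mpr hreg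
    have hqpos : 0 < q := by omega
    have hkq : k * q ≤ d := by
      rw [hq, mul_comm]
      exact Nat.div_mul_le_self d k
    set s := k / 2 with hs
    obtain ⟨P, hPsub, hPsep, hPcard⟩ := regimeI_points hqpos hkq hr0 hk s
    -- separation beats 2ε
    have hsep2 : ∀ p ∈ P, ∀ p' ∈ P, p ≠ p' → 2 * (1/8 * r) < dist p p' := by
      intro p hp p' hp' hne
      have hlt : 2 * (1/8 * r) < Real.sqrt ((s : ℝ) + 1) * r ^ 2 := by
        have hnat : k < 16 * (s + 1) := by omega
        have hnatR : (k : ℝ) < 16 * ((s : ℝ) + 1) := by exact_mod_cast hnat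
        have hx : (0:ℝ) < r ^ 2 := by positivity
        have hsq : (2 * (1/8 * r)) ^ 2 < (Real.sqrt ((s : ℝ) + 1) * r ^ 2) ^ 2 := by
          have hexp : (Real.sqrt ((s : ℝ) + 1) * r ^ 2) ^ 2 =
              (((s : ℝ) + 1) * r ^ 2) * r ^ 2 := by
            rw [mul_pow, Real.sq_sqrt (by positivity)]; ring
          rw [hexp]
          have h3 : ((16 * ((s : ℝ) + 1) - k) * r ^ 2) > 0 :=
            mul_pos (by linarith) hx
          have key : (1:ℝ)/16 < ((s : ℝ) + 1) * r ^ 2 := by nlinarith [hk]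
          have key2 := mul_lt_mul_of_pos_right key hx
          nlinarith [key2]
        have h2 : 0 ≤ Real.sqrt ((s : ℝ) + 1) * r ^ 2 := by positivity
        nlinarith [hsq, h2, (by positivity : (0:ℝ) ≤ 2 * (1/8 * r))]
      exact lt_of_lt_of_le hlt (hPsep p hp p' hp' hne)
    have hPN : P.card ≤ N := packing_le P hPsub hsep2 C hCN hCcov
    -- real-cast the counting bound
    set Q : ℝ := (q : ℝ) with hQ
    have hQ16 : (16 : ℝ) ≤ Q := by simp only [hQ]; exact_mod_cast hq16
    have hQ0 : (0 : ℝ) < Q := by linarith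
    have hcount : Q ^ k ≤ (P.card : ℝ) * (2 ^ k * Q ^ s) := by
      simp only [hQ]; exact_mod_cast hPcard
    have hPpos : (0 : ℝ) < (P.card : ℝ) := by
      by_contra hcon
      push_neg at hcon
      have h0 : (P.card : ℝ) = 0 := le_antisymm hcon (by positivity)
      rw [h0, zero_mul] at hcount
      nlinarith [pow_pos hQ0 k]
    have hlow : Q ^ k / (2 ^ k * Q ^ s) ≤ (P.card : ℝ) := by
      rw [div_le_iff₀ (by positivity)]
      linarith
    have hlogQ1 : (1 : ℝ) ≤ Real.log Q := by
      have h1 : Real.exp 1 ≤ Q := by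
        have := Real.exp_one_lt_d9
        linarith
      calc (1 : ℝ) = Real.log (Real.exp 1) := (Real.log_exp 1).symm
        _ ≤ Real.log Q := Real.log_le_log (Real.exp_pos 1) h1
    have hlog16 : Real.log 16 = 4 * Real.log 2 := by
      rw [show (16 : ℝ) = 2 ^ 4 by norm_num, Real.log_pow]
      push_cast; ring
    have hlogQ4 : 4 * Real.log 2 ≤ Real.log Q := by
      rw [← hlog16]
      exact Real.log_le_log (by norm_num) hQ16
    -- chain of log inequalities
    have hchain : ((k : ℝ) - s) * Real.log Q - (k : ℝ) * Real.log 2 ≤ Real.log (N : ℝ) := by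
      have h1 : Real.log (Q ^ k / (2 ^ k * Q ^ s)) ≤ Real.log (P.card : ℝ) :=
        Real.log_le_log (by positivity) hlow
      have h2 : Real.log (P.card : ℝ) ≤ Real.log (N : ℝ) := by
        apply Real.log_le_log hPpos
        exact_mod_cast hPN
      have h3 : Real.log (Q ^ k / (2 ^ k * Q ^ s)) =
          ((k : ℝ) - s) * Real.log Q - (k : ℝ) * Real.log 2 := by
        rw [Real.log_div (by positivity) (by positivity), Real.log_mul (by positivity)
          (by positivity), Real.log_pow, Real.log_pow, Real.log_pow]
        push_cast; ring
      linarith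
    -- numeric comparison
    have hsk : 2 * (s : ℝ) ≤ (k : ℝ) := by
      have : 2 * s ≤ k := by omega
      exact_mod_cast this
    have hdlt : (d : ℝ) < (k : ℝ) * (q + 1) := by
      have : d < k * (q + 1) := by
        have h1 : k * q + d % k = d := by rw [hq]; exact Nat.div_add_mod d k
        have h2 : d % k < k := Nat.mod_lt d (Nat.pos_of_ne_zero hk0)
        have h3 : k * (q + 1) = k * q + k := by ring
        omega
      exact_mod_cast this
    have hloguQ : Real.log u ≤ Real.log 2 + Real.log Q := by
      have h1 : u ≤ 2 * Q := by
        rw [hudk, div_le_iff₀ hkR]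
        have : (q : ℝ) + 1 ≤ 2 * Q := by rw [hQ]; push_cast; linarith
        nlinarith
      calc Real.log u ≤ Real.log (2 * Q) := Real.log_le_log hu0 h1
        _ = Real.log 2 + Real.log Q := Real.log_mul (by norm_num) (ne_of_gt hQ0)
    have hfinal : (1/10 : ℝ) * ((1 + Real.log u) * k) ≤
        ((k : ℝ) - s) * Real.log Q - (k : ℝ) * Real.log 2 := by
      have hbound : 1 + Real.log u ≤ (5/2) * Real.log Q := by
        have : (1 : ℝ) + Real.log 2 ≤ (3/2) * Real.log Q := by nlinarith
        linarith
      have hlhs : (1/10 : ℝ) * ((1 + Real.log u) * k) ≤ (k : ℝ)/4 * Real.log Q := by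
        calc (1/10 : ℝ) * ((1 + Real.log u) * k) ≤ 1/10 * (((5/2) * Real.log Q) * k) := by
              apply mul_le_mul_of_nonneg_left _ (by norm_num)
              apply mul_le_mul_of_nonneg_right hbound (by positivity)
          _ = (k : ℝ)/4 * Real.log Q := by ring
      have hrhs : (k : ℝ)/4 * Real.log Q ≤
          ((k : ℝ) - s) * Real.log Q - (k : ℝ) * Real.log 2 := by
        have h1 : (k : ℝ) * Real.log 2 ≤ (k : ℝ)/4 * Real.log Q := by nlinarith
        have h2 : (k : ℝ)/2 * Real.log Q ≤ ((k : ℝ) - s) * Real.log Q := by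
          apply mul_le_mul_of_nonneg_right _ (by linarith)
          linarith
        linarith
      linarith
    linarith
  · -- Regime II : volume bound
    push_neg at hreg
    have hvol := volumetric_lb hkd hr0 hε0 hk C hCcov
    have h4 : r / (2 * (1/8 * r)) = 4 := by
      field_simp
      ring
    rw [h4] at hvol
    have hCN' : (4 : ℝ) ^ k ≤ (N : ℝ) := by
      calc (4 : ℝ) ^ k ≤ (C.card : ℝ) := hvol
        _ ≤ (N : ℝ) := by exact_mod_cast hCN
    have hlogN : (k : ℝ) * Real.log 4 ≤ Real.log (N : ℝ) := by
      calc (k : ℝ) * Real.log 4 = Real.log ((4 : ℝ) ^ k) := by rw [Real.log_pow]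
        _ ≤ Real.log (N : ℝ) := Real.log_le_log (by positivity) hCN'
    have hlog4 : Real.log 4 = 2 * Real.log 2 := by
      rw [show (4 : ℝ) = 2 ^ 2 by norm_num, Real.log_pow]
      push_cast; ring
    have hulog : Real.log u ≤ 4 * Real.log 2 := by
      have h1 : u < 16 := by
        rw [hudk, div_lt_iff₀ hkR]
        have : (d : ℝ) < 16 * (k : ℝ) := by exact_mod_cast hreg
        linarith
      calc Real.log u ≤ Real.log 16 := Real.log_le_log hu0 (by linarith)
        _ = 4 * Real.log 2 := by
            rw [show (16 : ℝ) = 2 ^ 4 by norm_num, Real.log_pow]; push_cast; ring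
    have hfinal : (1/10 : ℝ) * ((1 + Real.log u) * k) ≤ (k : ℝ) * Real.log 4 := by
      rw [hlog4]
      nlinarith
    linarith
end
end
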